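/- arXiv:2403.00958 — 2 statements merged into one kernel-verified Lean document; each statement's English description precedes it below -/
import Mathlib

section
/- If P is a type-C poset of height one such that the relation graph RG(P) is a tree with |V(P)| > 1, then g_C(P) is contact. Moreover, if p_0 ∈ P^+ corresponds to a fixed vertex of degree one in RG(P), E_D denotes the set of dashed edges of RG(P) and E_{\bar D} the set of non-dashed edges, then the functional φ = (D_{p_0})* + Σ_{{p,q} ∈ E_{\bar D}} (R^±_{p,q})* + Σ_{{p,q} ∈ E_D, p<q} (R_{p,q})* (sum of dual-basis vectors with respect to the standard basis of g_C(P)) is a contact form for g_C(P). -/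
open scoped DirectSum

attribute [local instance 100] LieRing.ofAssociativeRing

namespace LiePoset

/-- A type-C poset on the ground set `{-n, …, -1, 1, …, n} ⊆ ℤ`:
a partial order `le` supported on that set such that `i ≼ j` implies `i ≤ j` in `ℤ`,
and for `i ≠ -j`, `i ≼ j ↔ -j ≼ -i`. -/
structure TypeCPoset (n : ℕ) where
  le : ℤ → ℤ → Prop
  supp : ∀ ⦃i j : ℤ⦄, le i j → i ≠ 0 ∧ |i| ≤ (n : ℤ) ∧ j ≠ 0 ∧ |j| ≤ (n : ℤ)
  refl : ∀ i : ℤ, i ≠ 0 → |i| ≤ (n : ℤ) → le i i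
  antisymm : ∀ ⦃i j : ℤ⦄, le i j → le j i → i = j
  trans : ∀ ⦃i j k : ℤ⦄, le i j → le j k → le i k
  compat : ∀ ⦃i j : ℤ⦄, le i j → i ≤ j
  nsymm : ∀ ⦃i j : ℤ⦄, i ≠ -j → (le i j ↔ le (-j) (-i))

namespace TypeCPoset

variable {n : ℕ}

/-- The strict relation `i ≺ j` of a type-C poset. -/
def lt (P : TypeCPoset n) (i j : ℤ) : Prop := P.le i j ∧ i ≠ j

/-- `P` has height one: every chain of `P` has cardinality at most two. -/
def HeightOne (P : TypeCPoset n) : Prop := ∀ i j k : ℤ, P.lt i j → P.lt j k → False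

/-- `P` is separable: there is no relation `x ≺ y` with `x` negative and `y` positive. -/
def Separable (P : TypeCPoset n) : Prop := ∀ i j : ℤ, i < 0 → 0 < j → ¬ P.lt i j

/-- `P` has height `(1,1)`: `P⁺` has height exactly one and `P` has height exactly one. -/
def Height11 (P : TypeCPoset n) : Prop :=
  P.HeightOne ∧ ∃ i j : ℤ, 0 < i ∧ 0 < j ∧ P.lt i j

/-- `P` has height `(0,1)`: `P⁺` has height zero and `P` has height exactly one. -/
def Height01 (P : TypeCPoset n) : Prop :=
  P.HeightOne ∧ (∀ i j : ℤ, 0 < i → 0 < j → ¬ P.lt i j) ∧ ∃ i j : ℤ, P.lt i j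

end TypeCPoset

/-- The vertex set of the relation graph: the positive elements `{1, …, n}`. -/
abbrev Pos (n : ℕ) : Type := {i : ℤ // i ∈ Finset.Icc (1 : ℤ) (n : ℤ)}

/-- The matrix index set `{-n, …, -1, 1, …, n}`. -/
abbrev Idx (n : ℕ) : Type := {i : ℤ // i ∈ (Finset.Icc (-(n : ℤ)) (n : ℤ)).erase 0}

/-- Negation on the index set. -/
def Idx.neg {n : ℕ} (a : Idx n) : Idx n :=
  ⟨-a.val, by
    have h := a.property
    simp only [Finset.mem_erase, Finset.mem_Icc] at h ⊢
    omega⟩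

/-- A positive vertex as a matrix index. -/
def Pos.toIdx {n : ℕ} (i : Pos n) : Idx n :=
  ⟨i.val, by
    have h := i.property
    simp only [Finset.mem_erase, Finset.mem_Icc] at h ⊢
    omega⟩

/-- `2n × 2n` complex matrices, with rows and columns indexed by `{-n, …, -1, 1, …, n}`. -/
abbrev Mat (n : ℕ) : Type := Matrix (Idx n) (Idx n) ℂ

namespace TypeCPoset

variable {n : ℕ}

/-- `D_i = E_{-i,-i} - E_{i,i}`. -/
def Dmat (i : Pos n) : Mat n :=
  Matrix.single i.toIdx.neg i.toIdx.neg 1 - Matrix.single i.toIdx i.toIdx 1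

/-- `R^±_{i,j} = E_{-i,j} + E_{-j,i}`. -/
def Rpm (i j : Pos n) : Mat n :=
  Matrix.single i.toIdx.neg j.toIdx 1 + Matrix.single j.toIdx.neg i.toIdx 1

/-- `R_{i,j} = E_{-j,-i} - E_{i,j}`. -/
def Rdash (i j : Pos n) : Mat n :=
  Matrix.single j.toIdx.neg i.toIdx.neg 1 - Matrix.single i.toIdx j.toIdx 1

/-- `E_{-i,i}`. -/
def Eloop (i : Pos n) : Mat n := Matrix.single i.toIdx.neg i.toIdx 1

/-- The standard spanning set of the type-C Lie poset algebra `g_C(P)`. -/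
def gcSet (P : TypeCPoset n) : Set (Mat n) :=
  {M | (∃ i : Pos n, M = Dmat i)
      ∨ (∃ i j : Pos n, P.lt (-j.val) (-i.val) ∧ M = Rdash i j)
      ∨ (∃ i j : Pos n, P.lt (-i.val) j.val ∧ P.lt (-j.val) i.val ∧ M = Rpm i j)
      ∨ (∃ i : Pos n, P.lt (-i.val) i.val ∧ M = Eloop i)}

/-- The simple graph underlying the relation graph `RG(P)`:
vertices `{1, …, n}`, with `i` adjacent to `j` (for `i ≠ j`) whenever there is a
(dashed or non-dashed) edge between them. -/
def RG (P : TypeCPoset n) : SimpleGraph (Pos n) where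
  Adj i j := i ≠ j ∧ (P.lt (-i.val) j.val ∨ P.lt (-j.val) i.val ∨
      P.lt (-i.val) (-j.val) ∨ P.lt (-j.val) (-i.val))
  symm := by
    refine ⟨fun i j h => ?_⟩
    exact ⟨h.1.symm, by tauto⟩
  loopless := by
    refine ⟨fun i h => ?_⟩
    exact h.1 rfl

/-- `RG(P)` has a (non-dashed) self-loop at vertex `i`, i.e. `-i ≺ i`. -/
def HasLoopAt (P : TypeCPoset n) (i : Pos n) : Prop := P.lt (-i.val) i.val

/-- There is a dashed edge `{i,j}` in `RG(P)`. -/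
def DashedEdge (P : TypeCPoset n) (i j : Pos n) : Prop :=
  P.lt (-i.val) (-j.val) ∨ P.lt (-j.val) (-i.val)

/-- There is a non-dashed edge `{i,j}` in `RG(P)` (a self-loop when `i = j`). -/
def NonDashedEdge (P : TypeCPoset n) (i j : Pos n) : Prop :=
  P.lt (-i.val) j.val ∨ P.lt (-j.val) i.val

open scoped Classical in
/-- The set of non-dashed edges of `RG(P)` (including self-loops). -/
noncomputable def edgesND (P : TypeCPoset n) : Finset (Sym2 (Pos n)) :=
  Finset.univ.filter fun e => ∃ i j : Pos n, e = Sym2.mk i j ∧ NonDashedEdge P i j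

open scoped Classical in
/-- The set of dashed edges of `RG(P)`. -/
noncomputable def edgesD (P : TypeCPoset n) : Finset (Sym2 (Pos n)) :=
  Finset.univ.filter fun e => ∃ i j : Pos n, e = Sym2.mk i j ∧ i ≠ j ∧ DashedEdge P i j

/-- `|E(P)|`, the number of edges of `RG(P)`. -/
noncomputable def numEdges (P : TypeCPoset n) : ℕ := (P.edgesND).card + (P.edgesD).card

/-- The cycles of `RG(P)`, recorded by their edge sets: a self-loop at `v`, or a cycle
of the underlying simple graph.  A cycle has an odd (resp. even) number of vertices
iff its edge set has odd (resp. even) cardinality. -/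
def cycles (P : TypeCPoset n) : Set (Finset (Sym2 (Pos n))) :=
  {s | ∃ v : Pos n, P.HasLoopAt v ∧ s = {Sym2.mk v v}} ∪
  {s | ∃ (v : Pos n) (p : (RG P).Walk v v), p.IsCycle ∧ s = p.edges.toFinset}

/-- The cycles of `RG(P)` contained in the connected component `c`. -/
def cyclesIn (P : TypeCPoset n) (c : (RG P).ConnectedComponent) :
    Set (Finset (Sym2 (Pos n))) :=
  {s | ∃ v : Pos n, (RG P).connectedComponentMk v = c ∧
    ((P.HasLoopAt v ∧ s = {Sym2.mk v v}) ∨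
      ∃ p : (RG P).Walk v v, p.IsCycle ∧ s = p.edges.toFinset)}

/-- `η(P)`: the number of connected components of `RG(P)` containing no odd cycles. -/
noncomputable def eta (P : TypeCPoset n) : ℕ :=
  Nat.card {c : (RG P).ConnectedComponent // ¬ ∃ s ∈ P.cyclesIn c, Odd s.card}

/-- The vertices visited by a cycle, recorded by its edge set. -/
def cycleVerts (s : Finset (Sym2 (Pos n))) : Set (Pos n) := {v | ∃ e ∈ s, v ∈ e}

end TypeCPoset

section LieDefs

variable (L : Type*) [LieRing L] [LieAlgebra ℂ L]

/-- The kernel of the bilinear form `B_φ(x, y) = φ⁅x, y⁆`. -/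
def coadjKernel (φ : Module.Dual ℂ L) : Submodule ℂ L where
  carrier := {x | ∀ y : L, φ ⁅x, y⁆ = 0}
  add_mem' := by
    intro a b ha hb y
    simp only [Set.mem_setOf_eq] at ha hb ⊢
    rw [add_lie, map_add, ha y, hb y, add_zero]
  zero_mem' := by
    intro y
    rw [zero_lie, map_zero]
  smul_mem' := by
    intro c x hx y
    simp only [Set.mem_setOf_eq] at hx ⊢
    rw [smul_lie, map_smul, hx y, smul_zero]

/-- The index of a Lie algebra: `ind g = min_{φ ∈ g*} dim ker(B_φ)`. -/
noncomputable def lieIndex : ℕ :=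
  sInf (Set.range fun φ : Module.Dual ℂ L => Module.finrank ℂ (coadjKernel L φ))

/-- `φ` is a contact form on `L`: `L` is odd-dimensional and the restriction of
`B_φ(x, y) = φ⁅x, y⁆` to `ker φ` is nondegenerate. -/
def IsContactForm (φ : Module.Dual ℂ L) : Prop :=
  Odd (Module.finrank ℂ L) ∧
    ∀ x : L, φ x = 0 → (∀ y : L, φ y = 0 → φ ⁅x, y⁆ = 0) → x = 0

/-- `L` is a contact Lie algebra. -/
def IsContact : Prop := ∃ φ : Module.Dual ℂ L, IsContactForm L φ

end LieDefs

end LiePoset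

namespace LiePoset

section Aux

open TypeCPoset Matrix

variable {n : ℕ}

/-! ### Index helpers -/

def nI (i : Pos n) : Idx n := i.toIdx.neg
def pI (i : Pos n) : Idx n := i.toIdx

lemma nI_val (i : Pos n) : (nI i).val = -i.val := rfl
lemma pI_val (i : Pos n) : (pI i).val = i.val := rfl

lemma Pos.val_pos (i : Pos n) : 0 < i.val := by
  have := i.property; simp only [Finset.mem_Icc] at this; omega

lemma Pos.ext_val {i j : Pos n} (h : i.val = j.val) : i = j := Subtype.ext h

@[simp] lemma nI_inj {i j : Pos n} : nI i = nI j ↔ i = j := by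
  constructor
  · intro h; apply Subtype.ext; have := congrArg Subtype.val h
    simp only [nI_val] at this; omega
  · rintro rfl; rfl

@[simp] lemma pI_inj {i j : Pos n} : pI i = pI j ↔ i = j := by
  constructor
  · intro h; exact Subtype.ext (congrArg Subtype.val h : (pI i).val = (pI j).val)
  · rintro rfl; rfl


@[simp] lemma nI_ne_pI (i j : Pos n) : nI i ≠ pI j := by
  intro h
  have := congrArg Subtype.val h
  have hi := i.val_pos; have hj := j.val_pos
  simp only [nI_val, pI_val] at this; omega

@[simp] lemma pI_ne_nI (i j : Pos n) : pI i ≠ nI j := fun h => nI_ne_pI j i h.symm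

lemma stdBasis_apply (a b c d : Idx n) (v : ℂ) :
    single a b v c d = if a = c ∧ b = d then v else 0 := rfl

end Aux

section Aux2

open TypeCPoset Matrix

variable {n : ℕ}

/-! ### Entry lemmas -/

lemma Dmat_nn (q p : Pos n) :
    Dmat q (nI p) (nI p) = if q = p then 1 else 0 := by
  have hD : Dmat q = single (nI q) (nI q) (1:ℂ) - single (pI q) (pI q) 1 := rfl
  rw [hD]
  rw [Matrix.sub_apply, stdBasis_apply, stdBasis_apply]
  by_cases h : q = p <;> simp [h]

lemma Dmat_np (q i j : Pos n) : Dmat q (nI i) (pI j) = 0 := by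
  have hD : Dmat q = single (nI q) (nI q) (1:ℂ) - single (pI q) (pI q) 1 := rfl
  rw [hD]
  rw [Matrix.sub_apply, stdBasis_apply, stdBasis_apply]
  simp

lemma Dmat_nn' (q i j : Pos n) (h : i ≠ j) : Dmat q (nI j) (nI i) = 0 := by
  have hD : Dmat q = single (nI q) (nI q) (1:ℂ) - single (pI q) (pI q) 1 := rfl
  rw [hD]
  rw [Matrix.sub_apply, stdBasis_apply, stdBasis_apply]
  have : ¬ (nI q = nI j ∧ nI q = nI i) := by
    rintro ⟨h1, h2⟩; rw [nI_inj] at h1 h2; exact h (h2.symm.trans h1).symm.symm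
  simp only [this, if_false]
  have : ¬ (pI q = nI j ∧ pI q = nI i) := by rintro ⟨h1, -⟩; exact pI_ne_nI q j h1
  simp [this]

lemma Rpm_nn (i j k l : Pos n) : Rpm i j (nI k) (nI l) = 0 := by
  have hD : Rpm i j = single (nI i) (pI j) (1:ℂ) + single (nI j) (pI i) 1 := rfl
  rw [hD]
  rw [Matrix.add_apply, stdBasis_apply, stdBasis_apply]
  simp [(pI_ne_nI j l).symm, (pI_ne_nI i l).symm]

lemma Rpm_np (i j k l : Pos n) (hij : i ≠ j) :
    Rpm i j (nI k) (pI l) = if (i = k ∧ j = l) ∨ (j = k ∧ i = l) then 1 else 0 := by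
  have hD : Rpm i j = single (nI i) (pI j) (1:ℂ) + single (nI j) (pI i) 1 := rfl
  rw [hD, Matrix.add_apply, stdBasis_apply, stdBasis_apply]
  have e1 : (nI i = nI k ∧ pI j = pI l) ↔ (i = k ∧ j = l) := by rw [nI_inj, pI_inj]
  have e2 : (nI j = nI k ∧ pI i = pI l) ↔ (j = k ∧ i = l) := by rw [nI_inj, pI_inj]
  rw [if_congr e1 rfl rfl, if_congr e2 rfl rfl]
  by_cases h1 : i = k ∧ j = l
  · obtain ⟨rfl, rfl⟩ := h1
    have h3 : ¬ (j = i ∧ i = j) := fun hc => hij hc.2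
    simp [h3]
  · by_cases h2 : j = k ∧ i = l
    · obtain ⟨rfl, rfl⟩ := h2
      have h3 : ¬ (i = j ∧ j = i) := fun hc => hij hc.1
      simp [h1, h3]
    · simp [h1, h2]

lemma Rdash_np (i j k l : Pos n) : Rdash i j (nI k) (pI l) = 0 := by
  have hD : Rdash i j = single (nI j) (nI i) (1:ℂ) - single (pI i) (pI j) 1 := rfl
  rw [hD]
  rw [Matrix.sub_apply, stdBasis_apply, stdBasis_apply]
  simp [(nI_ne_pI i l).symm]

lemma Rdash_nn (i j k l : Pos n) :
    Rdash i j (nI l) (nI k) = if j = l ∧ i = k then 1 else 0 := by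
  have hD : Rdash i j = single (nI j) (nI i) (1:ℂ) - single (pI i) (pI j) 1 := rfl
  rw [hD]
  rw [Matrix.sub_apply, stdBasis_apply, stdBasis_apply]
  by_cases h : j = l ∧ i = k
  · obtain ⟨rfl, rfl⟩ := h; simp
  · have h' : ¬ (nI j = nI l ∧ nI i = nI k) := by
      rintro ⟨ha, hb⟩; exact h ⟨nI_inj.mp ha, nI_inj.mp hb⟩
    simp [h, h']

/-! ### Poset helpers -/

lemma TypeCPoset.lt_nsymm (P : TypeCPoset n) {i j : ℤ} (h : i ≠ -j) :
    P.lt i j ↔ P.lt (-j) (-i) := by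
  unfold TypeCPoset.lt
  rw [P.nsymm h]
  constructor
  · rintro ⟨h1, h2⟩; exact ⟨h1, fun hc => h2 (by omega)⟩
  · rintro ⟨h1, h2⟩; exact ⟨h1, fun hc => h2 (by omega)⟩

lemma nd_symm (P : TypeCPoset n) {i j : Pos n} (hij : i.val ≠ j.val)
    (h : P.lt (-i.val) j.val) : P.lt (-j.val) i.val := by
  have h' := (P.lt_nsymm (show -i.val ≠ -j.val by omega)).mp h
  simpa using h'

lemma noLoop (P : TypeCPoset n) (hacyc : P.cycles = ∅) (i : Pos n) :
    ¬ P.lt (-i.val) i.val := by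
  intro h
  have : ({Sym2.mk i i} : Finset (Sym2 (Pos n))) ∈ P.cycles := Or.inl ⟨i, h, rfl⟩
  rw [hacyc] at this
  exact this

lemma ndRel_ne (P : TypeCPoset n) (hacyc : P.cycles = ∅) {i j : Pos n}
    (h : P.lt (-i.val) j.val) : i.val ≠ j.val := by
  intro hc
  exact noLoop P hacyc i (by rw [hc] at h ⊢; exact h)

lemma dRel_lt (P : TypeCPoset n) {i j : Pos n} (h : P.lt (-j.val) (-i.val)) :
    i.val < j.val := by
  have h1 := P.compat h.1
  have h2 := h.2
  omega

/-! ### Edge pair sets -/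

open scoped Classical in
noncomputable def ndP (P : TypeCPoset n) : Finset (Pos n × Pos n) :=
  Finset.univ.filter fun e => e.1.val < e.2.val ∧ P.lt (-e.1.val) e.2.val

open scoped Classical in
noncomputable def dP (P : TypeCPoset n) : Finset (Pos n × Pos n) :=
  Finset.univ.filter fun e => P.lt (-e.2.val) (-e.1.val)

lemma mem_ndP {P : TypeCPoset n} {e : Pos n × Pos n} :
    e ∈ ndP P ↔ e.1.val < e.2.val ∧ P.lt (-e.1.val) e.2.val := by
  simp [ndP]

lemma mem_dP {P : TypeCPoset n} {e : Pos n × Pos n} :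
    e ∈ dP P ↔ P.lt (-e.2.val) (-e.1.val) := by
  simp [dP]

lemma ndP_lt {P : TypeCPoset n} {e : Pos n × Pos n} (h : e ∈ ndP P) : e.1.val < e.2.val :=
  (mem_ndP.mp h).1

lemma dP_lt {P : TypeCPoset n} {e : Pos n × Pos n} (h : e ∈ dP P) : e.1.val < e.2.val :=
  dRel_lt P (mem_dP.mp h)

lemma ndP_ne {P : TypeCPoset n} {e : Pos n × Pos n} (h : e ∈ ndP P) : e.1 ≠ e.2 := by
  intro hc; have := ndP_lt h; rw [hc] at this; omega

lemma dP_ne {P : TypeCPoset n} {e : Pos n × Pos n} (h : e ∈ dP P) : e.1 ≠ e.2 := by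
  intro hc; have := dP_lt h; rw [hc] at this; omega

end Aux2

section Aux3

open TypeCPoset Matrix

variable {n : ℕ}

lemma Rpm_comm (i j : Pos n) : Rpm i j = Rpm j i := by
  unfold Rpm; exact add_comm _ _

/-- The contact functional, as a linear map on all matrices. -/
noncomputable def psiL (P : TypeCPoset n) (p₀ : Pos n) : Mat n →ₗ[ℂ] ℂ where
  toFun M := M (nI p₀) (nI p₀) + ((∑ e ∈ ndP P, M (nI e.1) (pI e.2))
    + (∑ e ∈ dP P, M (nI e.2) (nI e.1)))
  map_add' M N := by
    simp only [Matrix.add_apply, Finset.sum_add_distrib]; ring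
  map_smul' c M := by
    simp only [Matrix.smul_apply, smul_eq_mul, RingHom.id_apply]
    rw [mul_add, mul_add, Finset.mul_sum, Finset.mul_sum]

lemma psiL_D (P : TypeCPoset n) (p₀ p : Pos n) :
    psiL P p₀ (Dmat p) = if p = p₀ then 1 else 0 := by
  show Dmat p (nI p₀) (nI p₀) + _ = _
  rw [Dmat_nn]
  rw [Finset.sum_eq_zero (fun e _ => Dmat_np p e.1 e.2),
      Finset.sum_eq_zero (fun e he => Dmat_nn' p e.1 e.2 (dP_ne he))]
  simp

lemma psiL_Rpm (P : TypeCPoset n) (p₀ i j : Pos n) (hij : i.val ≠ j.val)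
    (hnd : P.lt (-i.val) j.val) : psiL P p₀ (Rpm i j) = 1 := by
  have hij' : i ≠ j := fun hc => hij (by rw [hc])
  show Rpm i j (nI p₀) (nI p₀) + _ = _
  have hz : (∑ e ∈ dP P, Rpm i j (nI e.2) (nI e.1)) = 0 :=
    Finset.sum_eq_zero (fun e _ => Rpm_nn i j e.2 e.1)
  rw [Rpm_nn, hz]
  rcases lt_or_gt_of_ne hij with hlt | hlt
  · have hmem : (i, j) ∈ ndP P := mem_ndP.mpr ⟨hlt, hnd⟩
    rw [Finset.sum_eq_single (i, j)]
    · rw [Rpm_np i j i j hij']; simp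
    · intro e he hne
      rw [Rpm_np i j e.1 e.2 hij']
      have : ¬ ((i = e.1 ∧ j = e.2) ∨ (j = e.1 ∧ i = e.2)) := by
        rintro (⟨rfl, rfl⟩ | ⟨rfl, rfl⟩)
        · exact hne rfl
        · have := ndP_lt he; omega
      simp [this]
    · intro hc; exact absurd hmem hc
  · have hnd' : P.lt (-j.val) i.val := nd_symm P hij hnd
    have hmem : (j, i) ∈ ndP P := mem_ndP.mpr ⟨hlt, hnd'⟩
    rw [Finset.sum_eq_single (j, i)]
    · rw [Rpm_np i j j i hij']; simp
    · intro e he hne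
      rw [Rpm_np i j e.1 e.2 hij']
      have : ¬ ((i = e.1 ∧ j = e.2) ∨ (j = e.1 ∧ i = e.2)) := by
        rintro (⟨rfl, rfl⟩ | ⟨rfl, rfl⟩)
        · have := ndP_lt he; omega
        · exact hne rfl
      simp [this]
    · intro hc; exact absurd hmem hc

lemma psiL_Rdash (P : TypeCPoset n) (p₀ i j : Pos n)
    (hd : P.lt (-j.val) (-i.val)) : psiL P p₀ (Rdash i j) = 1 := by
  have hlt : i.val < j.val := dRel_lt P hd
  have hij : i ≠ j := fun hc => by rw [hc] at hlt; omega
  show Rdash i j (nI p₀) (nI p₀) + _ = _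
  have h0 : Rdash i j (nI p₀) (nI p₀) = 0 := by
    rw [Rdash_nn]
    have : ¬ (j = p₀ ∧ i = p₀) := by rintro ⟨rfl, rfl⟩; exact hij rfl
    simp [this]
  rw [h0, Finset.sum_eq_zero (fun e _ => Rdash_np i j e.1 e.2)]
  have hmem : (i, j) ∈ dP P := mem_dP.mpr hd
  rw [Finset.sum_eq_single (i, j)]
  · rw [Rdash_nn]; simp
  · intro e he hne
    rw [Rdash_nn]
    have : ¬ (j = e.2 ∧ i = e.1) := by
      rintro ⟨rfl, rfl⟩; exact hne (Prod.ext rfl rfl)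
    simp [this]
  · intro hc; exact absurd hmem hc

end Aux3

section Aux4

open TypeCPoset Matrix

variable {n : ℕ}

lemma stdMul_ne {b c : Idx n} (a d : Idx n) (h : b ≠ c) :
    single a b (1:ℂ) * single c d 1 = 0 :=
  single_mul_single_of_ne (c := (1:ℂ)) a b c h 1

lemma stdMul_same (a b d : Idx n) :
    single a b (1:ℂ) * single b d 1 = single a d 1 := by
  rw [single_mul_single_same, one_mul]

lemma hD_eq (p : Pos n) :
    Dmat p = single (nI p) (nI p) (1:ℂ) - single (pI p) (pI p) 1 := rfl

lemma hR_eq (i j : Pos n) :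
    Rpm i j = single (nI i) (pI j) (1:ℂ) + single (nI j) (pI i) 1 := rfl

lemma hRd_eq (i j : Pos n) :
    Rdash i j = single (nI j) (nI i) (1:ℂ) - single (pI i) (pI j) 1 := rfl

lemma lie_D_D (p q : Pos n) : ⁅Dmat p, Dmat q⁆ = (0 : Mat n) := by
  by_cases h : p = q
  · subst h; exact lie_self _
  · have key : ∀ a b : Pos n, a ≠ b → Dmat a * Dmat b = 0 := by
      intro a b hab
      rw [hD_eq, hD_eq, sub_mul, mul_sub, mul_sub]
      rw [stdMul_ne _ _ (by simp [hab]), stdMul_ne _ _ (by simp),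
          stdMul_ne _ _ (by simp), stdMul_ne _ _ (by simp [hab])]
      simp
    rw [Ring.lie_def, key p q h, key q p (Ne.symm h), sub_zero]

lemma lie_D_Rpm (p i j : Pos n) (hij : i ≠ j) :
    ⁅Dmat p, Rpm i j⁆
      = (((if p = i then 1 else 0) + (if p = j then 1 else 0)) : ℂ) • Rpm i j := by
  have hji : j ≠ i := Ne.symm hij
  have h1 : Dmat p * Rpm i j
      = (if p = i then 1 else 0) • single (nI i) (pI j) (1:ℂ)
        + (if p = j then 1 else 0) • single (nI j) (pI i) (1:ℂ) := by
    rw [hD_eq, hR_eq, sub_mul, mul_add, mul_add]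
    by_cases hpi : p = i
    · subst hpi
      rw [stdMul_same, stdMul_ne _ _ (by simp [hij]), stdMul_ne _ _ (by simp),
          stdMul_ne _ _ (by simp)]
      simp [hij]
    · by_cases hpj : p = j
      · subst hpj
        rw [stdMul_ne _ _ (by simp [hpi]), stdMul_same, stdMul_ne _ _ (by simp),
            stdMul_ne _ _ (by simp)]
        simp [hpi]
      · rw [stdMul_ne _ _ (by simp [hpi]), stdMul_ne _ _ (by simp [hpj]),
            stdMul_ne _ _ (by simp), stdMul_ne _ _ (by simp)]
        simp [hpi, hpj]
  have h2 : Rpm i j * Dmat p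
      = -((if p = j then 1 else 0) • single (nI i) (pI j) (1:ℂ))
        - (if p = i then 1 else 0) • single (nI j) (pI i) (1:ℂ) := by
    rw [hD_eq, hR_eq, add_mul, mul_sub, mul_sub]
    by_cases hpi : p = i
    · subst hpi
      rw [stdMul_ne _ _ (by simp), stdMul_ne _ _ (by simp [hji]),
          stdMul_ne _ _ (by simp), stdMul_same]
      simp [hij]
    · by_cases hpj : p = j
      · subst hpj
        rw [stdMul_ne _ _ (by simp), stdMul_same, stdMul_ne _ _ (by simp),
            stdMul_ne _ _ (by simp [hij])]
        simp [hpi]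
      · have hip : ¬ i = p := fun h => hpi h.symm
        have hjp : ¬ j = p := fun h => hpj h.symm
        rw [stdMul_ne _ _ (by simp), stdMul_ne _ _ (by simp [hjp]),
            stdMul_ne _ _ (by simp), stdMul_ne _ _ (by simp [hip])]
        simp [hpi, hpj]
  rw [Ring.lie_def, h1, h2, hR_eq, smul_add]
  module

lemma lie_D_Rdash (p i j : Pos n) (hij : i ≠ j) :
    ⁅Dmat p, Rdash i j⁆
      = (((if p = j then 1 else 0) - (if p = i then 1 else 0)) : ℂ) • Rdash i j := by
  have hji : j ≠ i := Ne.symm hij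
  have h1 : Dmat p * Rdash i j
      = (if p = j then 1 else 0) • single (nI j) (nI i) (1:ℂ)
        + (if p = i then 1 else 0) • single (pI i) (pI j) (1:ℂ) := by
    rw [hD_eq, hRd_eq, sub_mul, mul_sub, mul_sub]
    by_cases hpj : p = j
    · subst hpj
      rw [stdMul_same, stdMul_ne _ _ (by simp), stdMul_ne _ _ (by simp),
          stdMul_ne _ _ (by simp [Ne.symm hij])]
      simp [hji]
    · by_cases hpi : p = i
      · subst hpi
        rw [stdMul_ne _ _ (by simp [hpj]), stdMul_ne _ _ (by simp),
            stdMul_ne _ _ (by simp), stdMul_same]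
        simp [hpj]
      · have hip : ¬ i = p := fun h => hpi h.symm
        have hjp : ¬ j = p := fun h => hpj h.symm
        rw [stdMul_ne _ _ (by simp [hpj, hjp]), stdMul_ne _ _ (by simp),
            stdMul_ne _ _ (by simp), stdMul_ne _ _ (by simp [hpi, hip])]
        simp [hpi, hpj]
  have h2 : Rdash i j * Dmat p
      = (if p = i then 1 else 0) • single (nI j) (nI i) (1:ℂ)
        + (if p = j then 1 else 0) • single (pI i) (pI j) (1:ℂ) := by
    rw [hD_eq, hRd_eq, sub_mul, mul_sub, mul_sub]
    by_cases hpi : p = i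
    · subst hpi
      rw [stdMul_same, stdMul_ne _ _ (by simp), stdMul_ne _ _ (by simp),
          stdMul_ne _ _ (by simp [Ne.symm hij])]
      simp [hij]
    · by_cases hpj : p = j
      · subst hpj
        rw [stdMul_ne _ _ (by simp [Ne.symm hpi]), stdMul_ne _ _ (by simp),
            stdMul_ne _ _ (by simp), stdMul_same]
        simp [hpi]
      · have hip : ¬ i = p := fun h => hpi h.symm
        have hjp : ¬ j = p := fun h => hpj h.symm
        rw [stdMul_ne _ _ (by simp [hip]), stdMul_ne _ _ (by simp),
            stdMul_ne _ _ (by simp), stdMul_ne _ _ (by simp [hjp])]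
        simp [hpi, hpj]
  rw [Ring.lie_def, h1, h2, hRd_eq, smul_sub]
  module

lemma lie_Rpm_Rpm (i j k l : Pos n) : ⁅Rpm i j, Rpm k l⁆ = (0 : Mat n) := by
  have key : ∀ a b c d : Pos n, Rpm a b * Rpm c d = 0 := by
    intro a b c d
    rw [hR_eq, hR_eq, add_mul, mul_add, mul_add]
    rw [stdMul_ne _ _ (by simp), stdMul_ne _ _ (by simp),
        stdMul_ne _ _ (by simp), stdMul_ne _ _ (by simp)]
    simp
  rw [Ring.lie_def, key, key, sub_zero]

lemma lie_Rpm_Rdash (i j k l : Pos n) (hik : i ≠ k) (hjk : j ≠ k) :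
    ⁅Rpm i j, Rdash k l⁆ = (0 : Mat n) := by
  have h1 : Rpm i j * Rdash k l = 0 := by
    rw [hR_eq, hRd_eq, mul_sub, add_mul, add_mul]
    rw [stdMul_ne _ _ (by simp), stdMul_ne _ _ (by simp),
        stdMul_ne _ _ (by simp [hjk]), stdMul_ne _ _ (by simp [hik])]
    simp
  have h2 : Rdash k l * Rpm i j = 0 := by
    rw [hR_eq, hRd_eq, sub_mul, mul_add, mul_add]
    have hki : ¬ k = i := fun h => hik h.symm
    have hkj : ¬ k = j := fun h => hjk h.symm
    rw [stdMul_ne _ _ (by simp [hki]),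
        stdMul_ne _ _ (by simp [hkj]),
        stdMul_ne _ _ (by simp), stdMul_ne _ _ (by simp)]
    simp
  rw [Ring.lie_def, h1, h2, sub_zero]

lemma lie_Rdash_Rdash (i j k l : Pos n) (hil : i ≠ l) (hjk : j ≠ k) :
    ⁅Rdash i j, Rdash k l⁆ = (0 : Mat n) := by
  have h1 : Rdash i j * Rdash k l = 0 := by
    rw [hRd_eq, hRd_eq, mul_sub, sub_mul, sub_mul]
    rw [stdMul_ne _ _ (by simp [hil]), stdMul_ne _ _ (by simp),
        stdMul_ne _ _ (by simp), stdMul_ne _ _ (by simp [hjk])]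
    simp
  have h2 : Rdash k l * Rdash i j = 0 := by
    rw [hRd_eq, hRd_eq, mul_sub, sub_mul, sub_mul]
    have hkj : ¬ k = j := fun h => hjk h.symm
    have hli : ¬ l = i := fun h => hil h.symm
    rw [stdMul_ne _ _ (by simp [hkj]), stdMul_ne _ _ (by simp),
        stdMul_ne _ _ (by simp), stdMul_ne _ _ (by simp [hli])]
    simp
  rw [Ring.lie_def, h1, h2, sub_zero]

end Aux4

section Aux5

open TypeCPoset Matrix

variable {n : ℕ}

/-- The bilinear form `B_φ` in terms of matrix entries. -/
noncomputable def Fform (P : TypeCPoset n) (x y : Mat n) : ℂ :=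
  (∑ e ∈ ndP P, ((x (nI e.1) (nI e.1) + x (nI e.2) (nI e.2)) * y (nI e.1) (pI e.2)
    - (y (nI e.1) (nI e.1) + y (nI e.2) (nI e.2)) * x (nI e.1) (pI e.2)))
  + (∑ e ∈ dP P, ((x (nI e.2) (nI e.2) - x (nI e.1) (nI e.1)) * y (nI e.2) (nI e.1)
    - (y (nI e.2) (nI e.2) - y (nI e.1) (nI e.1)) * x (nI e.2) (nI e.1)))

lemma Fform_add_left (P : TypeCPoset n) (x x' y : Mat n) :
    Fform P (x + x') y = Fform P x y + Fform P x' y := by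
  unfold Fform
  rw [add_add_add_comm, ← Finset.sum_add_distrib, ← Finset.sum_add_distrib]
  congr 1
  · exact Finset.sum_congr rfl fun e _ => by simp only [Matrix.add_apply]; ring
  · exact Finset.sum_congr rfl fun e _ => by simp only [Matrix.add_apply]; ring

lemma Fform_smul_left (P : TypeCPoset n) (c : ℂ) (x y : Mat n) :
    Fform P (c • x) y = c * Fform P x y := by
  unfold Fform
  rw [mul_add, Finset.mul_sum, Finset.mul_sum]
  congr 1
  · exact Finset.sum_congr rfl fun e _ => by simp only [Matrix.smul_apply, smul_eq_mul]; ring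
  · exact Finset.sum_congr rfl fun e _ => by simp only [Matrix.smul_apply, smul_eq_mul]; ring

lemma Fform_zero_left (P : TypeCPoset n) (y : Mat n) : Fform P 0 y = 0 := by
  unfold Fform
  rw [Finset.sum_eq_zero, Finset.sum_eq_zero, add_zero] <;>
    (intro e _; simp only [Matrix.zero_apply]; ring)

lemma Fform_skew (P : TypeCPoset n) (x y : Mat n) : Fform P y x = - Fform P x y := by
  unfold Fform
  rw [neg_add, ← Finset.sum_neg_distrib, ← Finset.sum_neg_distrib]
  congr 1
  · exact Finset.sum_congr rfl fun e _ => by ring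
  · exact Finset.sum_congr rfl fun e _ => by ring

lemma Fform_add_right (P : TypeCPoset n) (x y y' : Mat n) :
    Fform P x (y + y') = Fform P x y + Fform P x y' := by
  rw [Fform_skew, Fform_add_left, Fform_skew P x y, Fform_skew P x y']; ring

lemma Fform_smul_right (P : TypeCPoset n) (c : ℂ) (x y : Mat n) :
    Fform P x (c • y) = c * Fform P x y := by
  rw [Fform_skew, Fform_smul_left, Fform_skew P x y]; ring

lemma Fform_zero_right (P : TypeCPoset n) (x : Mat n) : Fform P x 0 = 0 := by
  rw [Fform_skew, Fform_zero_left, neg_zero]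

lemma Rdash_diag (i j p : Pos n) (hij : i ≠ j) : Rdash i j (nI p) (nI p) = 0 := by
  rw [Rdash_nn]
  have : ¬ (j = p ∧ i = p) := by rintro ⟨rfl, rfl⟩; exact hij rfl
  simp [this]

lemma Fform_diagzero (P : TypeCPoset n) {x y : Mat n}
    (hx : ∀ p, x (nI p) (nI p) = 0) (hy : ∀ p, y (nI p) (nI p) = 0) :
    Fform P x y = 0 := by
  unfold Fform
  rw [Finset.sum_eq_zero, Finset.sum_eq_zero, add_zero] <;>
    (intro e _; rw [hx, hx, hy, hy]; ring)

lemma Fform_D_D (P : TypeCPoset n) (p q : Pos n) : Fform P (Dmat p) (Dmat q) = 0 := by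
  unfold Fform
  rw [Finset.sum_eq_zero, Finset.sum_eq_zero, add_zero]
  · intro e he
    rw [Dmat_nn' p e.1 e.2 (dP_ne he), Dmat_nn' q e.1 e.2 (dP_ne he)]; ring
  · intro e _
    rw [Dmat_np p e.1 e.2, Dmat_np q e.1 e.2]; ring

lemma Fform_D_Rpm (P : TypeCPoset n) (p i j : Pos n) (hij : i.val ≠ j.val)
    (hnd : P.lt (-i.val) j.val) :
    Fform P (Dmat p) (Rpm i j)
      = (if p = i then 1 else 0) + (if p = j then 1 else 0) := by
  have hij' : i ≠ j := fun hc => hij (by rw [hc])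
  unfold Fform
  have hz : (∑ e ∈ dP P, ((Dmat p (nI e.2) (nI e.2) - Dmat p (nI e.1) (nI e.1))
      * Rpm i j (nI e.2) (nI e.1)
      - (Rpm i j (nI e.2) (nI e.2) - Rpm i j (nI e.1) (nI e.1))
      * Dmat p (nI e.2) (nI e.1))) = 0 := by
    refine Finset.sum_eq_zero fun e _ => ?_
    rw [Rpm_nn, Rpm_nn, Rpm_nn]; ring
  rw [hz, add_zero]
  rcases lt_or_gt_of_ne hij with hlt | hlt
  · have hmem : (i, j) ∈ ndP P := mem_ndP.mpr ⟨hlt, hnd⟩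
    rw [Finset.sum_eq_single (i, j)]
    · rw [Rpm_np i j i j hij', Rpm_nn, Rpm_nn, Dmat_np, Dmat_nn, Dmat_nn]; simp
    · intro e he hne
      rw [Rpm_np i j e.1 e.2 hij', Rpm_nn, Rpm_nn, Dmat_np]
      have : ¬ ((i = e.1 ∧ j = e.2) ∨ (j = e.1 ∧ i = e.2)) := by
        rintro (⟨rfl, rfl⟩ | ⟨rfl, rfl⟩)
        · exact hne rfl
        · have := ndP_lt he; omega
      simp [this]
    · intro hc; exact absurd hmem hc
  · have hnd' : P.lt (-j.val) i.val := nd_symm P hij hnd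
    have hmem : (j, i) ∈ ndP P := mem_ndP.mpr ⟨hlt, hnd'⟩
    rw [Finset.sum_eq_single (j, i)]
    · rw [Rpm_np i j j i hij', Rpm_nn, Rpm_nn, Dmat_np, Dmat_nn, Dmat_nn]; simp
      ring
    · intro e he hne
      rw [Rpm_np i j e.1 e.2 hij', Rpm_nn, Rpm_nn, Dmat_np]
      have : ¬ ((i = e.1 ∧ j = e.2) ∨ (j = e.1 ∧ i = e.2)) := by
        rintro (⟨rfl, rfl⟩ | ⟨rfl, rfl⟩)
        · have := ndP_lt he; omega
        · exact hne rfl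
      simp [this]
    · intro hc; exact absurd hmem hc

lemma Fform_D_Rdash (P : TypeCPoset n) (p i j : Pos n)
    (hd : P.lt (-j.val) (-i.val)) :
    Fform P (Dmat p) (Rdash i j)
      = (if p = j then 1 else 0) - (if p = i then 1 else 0) := by
  have hlt : i.val < j.val := dRel_lt P hd
  have hij' : i ≠ j := fun hc => by rw [hc] at hlt; omega
  unfold Fform
  have hz : (∑ e ∈ ndP P, ((Dmat p (nI e.1) (nI e.1) + Dmat p (nI e.2) (nI e.2))
      * Rdash i j (nI e.1) (pI e.2)
      - (Rdash i j (nI e.1) (nI e.1) + Rdash i j (nI e.2) (nI e.2))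
      * Dmat p (nI e.1) (pI e.2))) = 0 := by
    refine Finset.sum_eq_zero fun e _ => ?_
    rw [Rdash_np, Rdash_diag i j _ hij', Rdash_diag i j _ hij', Dmat_np]; ring
  rw [hz, zero_add]
  have hmem : (i, j) ∈ dP P := mem_dP.mpr hd
  rw [Finset.sum_eq_single (i, j)]
  · rw [Rdash_nn, Rdash_diag i j _ hij', Rdash_diag i j _ hij',
        Dmat_nn' p i j hij', Dmat_nn, Dmat_nn]
    simp
  · intro e he hne
    rw [Rdash_nn, Rdash_diag i j _ hij', Rdash_diag i j _ hij',
        Dmat_nn' p e.1 e.2 (dP_ne he)]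
    have : ¬ (j = e.2 ∧ i = e.1) := by
      rintro ⟨rfl, rfl⟩; exact hne (Prod.ext rfl rfl)
    simp [this]
  · intro hc; exact absurd hmem hc

end Aux5

section Aux6

open TypeCPoset Matrix

variable {n : ℕ}

lemma d_to_pos (P : TypeCPoset n) {i j : Pos n} (hd : P.lt (-j.val) (-i.val)) :
    P.lt i.val j.val := by
  have h := (P.lt_nsymm (show (-j.val) ≠ -(-i.val) by
    have := i.val_pos; have := j.val_pos; omega)).mp hd
  simpa using h

lemma flip_id {P : TypeCPoset n} {p₀ : Pos n} {x y : Mat n}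
    (h : psiL P p₀ ⁅x, y⁆ = Fform P x y) : psiL P p₀ ⁅y, x⁆ = Fform P y x := by
  rw [← lie_skew, map_neg, h]
  exact (Fform_skew P x y).symm

lemma gen_case (P : TypeCPoset n) (hP : P.HeightOne) (hacyc : P.cycles = ∅)
    (p₀ : Pos n) :
    ∀ x ∈ gcSet P, ∀ y ∈ gcSet P, psiL P p₀ ⁅x, y⁆ = Fform P x y := by
  have hDRpm : ∀ p i j, P.lt (-i.val) j.val → P.lt (-j.val) i.val →
      psiL P p₀ ⁅Dmat p, Rpm i j⁆ = Fform P (Dmat p) (Rpm i j) := by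
    intro p i j h1 h2
    have hijv : i.val ≠ j.val := ndRel_ne P hacyc h1
    have hij : i ≠ j := fun hc => hijv (by rw [hc])
    rw [lie_D_Rpm p i j hij, _root_.map_smul, smul_eq_mul, psiL_Rpm P p₀ i j hijv h1,
        Fform_D_Rpm P p i j hijv h1, mul_one]
  have hDRd : ∀ p i j, P.lt (-j.val) (-i.val) →
      psiL P p₀ ⁅Dmat p, Rdash i j⁆ = Fform P (Dmat p) (Rdash i j) := by
    intro p i j hd
    have hlt : i.val < j.val := dRel_lt P hd
    have hij : i ≠ j := fun hc => by rw [hc] at hlt; omega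
    rw [lie_D_Rdash p i j hij, _root_.map_smul, smul_eq_mul, psiL_Rdash P p₀ i j hd,
        Fform_D_Rdash P p i j hd, mul_one]
  intro x hx y hy
  rcases hx with ⟨p, rfl⟩ | ⟨i, j, hdij, rfl⟩ | ⟨i, j, h1, h2, rfl⟩ | ⟨i, hl, rfl⟩
  · -- x = Dmat p
    rcases hy with ⟨q, rfl⟩ | ⟨k, l, hdkl, rfl⟩ | ⟨k, l, h1, h2, rfl⟩ | ⟨k, hl, rfl⟩
    · rw [lie_D_D, map_zero, Fform_D_D]
    · exact hDRd p k l hdkl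
    · exact hDRpm p k l h1 h2
    · exact absurd hl (noLoop P hacyc k)
  · -- x = Rdash i j
    have hij : i ≠ j := fun hc => by have := dRel_lt P hdij; rw [hc] at this; omega
    have hposij : P.lt i.val j.val := d_to_pos P hdij
    rcases hy with ⟨q, rfl⟩ | ⟨k, l, hdkl, rfl⟩ | ⟨k, l, h1, h2, rfl⟩ | ⟨k, hl, rfl⟩
    · exact flip_id (hDRd q i j hdij)
    · have hkl : k ≠ l := fun hc => by have := dRel_lt P hdkl; rw [hc] at this; omega
      have hposkl : P.lt k.val l.val := d_to_pos P hdkl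
      have hil : i ≠ l := by
        rintro rfl
        exact hP _ _ _ hposkl hposij
      have hjk : j ≠ k := by
        rintro rfl
        exact hP _ _ _ hposij hposkl
      rw [lie_Rdash_Rdash i j k l hil hjk, map_zero,
          Fform_diagzero P (fun p => Rdash_diag i j p hij) (fun p => Rdash_diag k l p hkl)]
    · -- y = Rpm k l
      have hklv : k.val ≠ l.val := ndRel_ne P hacyc h1
      have hkl : k ≠ l := fun hc => hklv (by rw [hc])
      have hki : k ≠ i := by
        rintro rfl
        exact hP _ _ _ h2 hposij
      have hli : l ≠ i := by
        rintro rfl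
        exact hP _ _ _ h1 hposij
      refine flip_id ?_
      rw [lie_Rpm_Rdash k l i j hki hli, map_zero,
          Fform_diagzero P (fun p => Rpm_nn k l p p) (fun p => Rdash_diag i j p hij)]
    · exact absurd hl (noLoop P hacyc k)
  · -- x = Rpm i j
    have hijv : i.val ≠ j.val := ndRel_ne P hacyc h1
    have hij : i ≠ j := fun hc => hijv (by rw [hc])
    rcases hy with ⟨q, rfl⟩ | ⟨k, l, hdkl, rfl⟩ | ⟨k, l, h1', h2', rfl⟩ | ⟨k, hl, rfl⟩
    · exact flip_id (hDRpm q i j h1 h2)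
    · have hkl : k ≠ l := fun hc => by have := dRel_lt P hdkl; rw [hc] at this; omega
      have hposkl : P.lt k.val l.val := d_to_pos P hdkl
      have hik : i ≠ k := by
        rintro rfl
        exact hP _ _ _ h2 hposkl
      have hjk : j ≠ k := by
        rintro rfl
        exact hP _ _ _ h1 hposkl
      rw [lie_Rpm_Rdash i j k l hik hjk, map_zero,
          Fform_diagzero P (fun p => Rpm_nn i j p p) (fun p => Rdash_diag k l p hkl)]
    · rw [lie_Rpm_Rpm, map_zero,
          Fform_diagzero P (fun p => Rpm_nn i j p p) (fun p => Rpm_nn k l p p)]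
    · exact absurd hl (noLoop P hacyc k)
  · exact absurd hl (noLoop P hacyc i)

theorem psi_lie_eq_Fform (P : TypeCPoset n) (hP : P.HeightOne) (hacyc : P.cycles = ∅)
    (p₀ : Pos n) :
    ∀ x ∈ Submodule.span ℂ (gcSet P), ∀ y ∈ Submodule.span ℂ (gcSet P),
      psiL P p₀ ⁅x, y⁆ = Fform P x y := by
  intro x hx
  induction hx using Submodule.span_induction with
  | mem x hxg =>
    intro y hy
    induction hy using Submodule.span_induction with
    | mem y hyg => exact gen_case P hP hacyc p₀ x hxg y hyg
    | zero => rw [lie_zero, map_zero, Fform_zero_right]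
    | add y z hy hz ihy ihz => rw [lie_add, map_add, ihy, ihz, Fform_add_right]
    | smul c y hy ih => rw [lie_smul, _root_.map_smul, smul_eq_mul, ih, Fform_smul_right]
  | zero => intro y hy; rw [zero_lie, map_zero, Fform_zero_left]
  | add x z hx hz ihx ihz =>
    intro y hy
    rw [add_lie, map_add, ihx y hy, ihz y hy, Fform_add_left]
  | smul c x hx ih =>
    intro y hy
    rw [smul_lie, _root_.map_smul, smul_eq_mul, ih y hy, Fform_smul_left]

end Aux6

section Aux7

open TypeCPoset Matrix

variable {n : ℕ}

/-- Reconstruction of a matrix in the span from its coordinates. -/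
noncomputable def recon (P : TypeCPoset n) (M : Mat n) : Mat n :=
  (∑ p : Pos n, M (nI p) (nI p) • Dmat p)
  + (∑ e ∈ ndP P, M (nI e.1) (pI e.2) • Rpm e.1 e.2)
  + (∑ e ∈ dP P, M (nI e.2) (nI e.1) • Rdash e.1 e.2)

lemma recon_add (P : TypeCPoset n) (M N : Mat n) :
    recon P (M + N) = recon P M + recon P N := by
  unfold recon
  simp only [Matrix.add_apply, add_smul, Finset.sum_add_distrib]
  abel

lemma recon_smul (P : TypeCPoset n) (c : ℂ) (M : Mat n) :
    recon P (c • M) = c • recon P M := by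
  unfold recon
  simp only [Matrix.smul_apply, smul_eq_mul, mul_smul, smul_add, Finset.smul_sum]

lemma recon_zero (P : TypeCPoset n) : recon P (0 : Mat n) = 0 := by
  unfold recon
  simp

lemma recon_D (P : TypeCPoset n) (q : Pos n) : recon P (Dmat q) = Dmat q := by
  unfold recon
  have hz2 : (∑ e ∈ ndP P, Dmat q (nI e.1) (pI e.2) • Rpm e.1 e.2) = 0 :=
    Finset.sum_eq_zero fun e _ => by rw [Dmat_np]; exact zero_smul ℂ _
  have hz3 : (∑ e ∈ dP P, Dmat q (nI e.2) (nI e.1) • Rdash e.1 e.2) = 0 :=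
    Finset.sum_eq_zero fun e he => by rw [Dmat_nn' q e.1 e.2 (dP_ne he)]; exact zero_smul ℂ _
  rw [hz2, hz3, add_zero, add_zero]
  have : ∀ p ∈ Finset.univ, (Dmat q (nI p) (nI p)) • Dmat p
      = if q = p then Dmat p else 0 := by
    intro p _
    rw [Dmat_nn, ite_smul, one_smul, zero_smul]
  rw [Finset.sum_congr rfl this, Finset.sum_ite_eq]
  simp

lemma recon_Rpm (P : TypeCPoset n) (i j : Pos n) (hijv : i.val ≠ j.val)
    (hnd : P.lt (-i.val) j.val) : recon P (Rpm i j) = Rpm i j := by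
  have hij' : i ≠ j := fun hc => hijv (by rw [hc])
  unfold recon
  have hz1 : (∑ p : Pos n, Rpm i j (nI p) (nI p) • Dmat p) = 0 :=
    Finset.sum_eq_zero fun p _ => by rw [Rpm_nn]; exact zero_smul ℂ _
  have hz3 : (∑ e ∈ dP P, Rpm i j (nI e.2) (nI e.1) • Rdash e.1 e.2) = 0 :=
    Finset.sum_eq_zero fun e _ => by rw [Rpm_nn]; exact zero_smul ℂ _
  rw [hz1, hz3, zero_add, add_zero]
  rcases lt_or_gt_of_ne hijv with hlt | hlt
  · have hmem : (i, j) ∈ ndP P := mem_ndP.mpr ⟨hlt, hnd⟩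
    rw [Finset.sum_eq_single (i, j)]
    · rw [Rpm_np i j i j hij']; simp
    · intro e he hne
      rw [Rpm_np i j e.1 e.2 hij']
      have : ¬ ((i = e.1 ∧ j = e.2) ∨ (j = e.1 ∧ i = e.2)) := by
        rintro (⟨rfl, rfl⟩ | ⟨rfl, rfl⟩)
        · exact hne rfl
        · have := ndP_lt he; omega
      simp [this]
    · intro hc; exact absurd hmem hc
  · have hnd' : P.lt (-j.val) i.val := nd_symm P hijv hnd
    have hmem : (j, i) ∈ ndP P := mem_ndP.mpr ⟨hlt, hnd'⟩
    rw [Finset.sum_eq_single (j, i)]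
    · rw [Rpm_np i j j i hij']
      simp [Rpm_comm j i]
    · intro e he hne
      rw [Rpm_np i j e.1 e.2 hij']
      have : ¬ ((i = e.1 ∧ j = e.2) ∨ (j = e.1 ∧ i = e.2)) := by
        rintro (⟨rfl, rfl⟩ | ⟨rfl, rfl⟩)
        · have := ndP_lt he; omega
        · exact hne rfl
      simp [this]
    · intro hc; exact absurd hmem hc

lemma recon_Rdash (P : TypeCPoset n) (i j : Pos n)
    (hd : P.lt (-j.val) (-i.val)) : recon P (Rdash i j) = Rdash i j := by
  have hlt : i.val < j.val := dRel_lt P hd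
  have hij' : i ≠ j := fun hc => by rw [hc] at hlt; omega
  unfold recon
  have hz1 : (∑ p : Pos n, Rdash i j (nI p) (nI p) • Dmat p) = 0 :=
    Finset.sum_eq_zero fun p _ => by rw [Rdash_diag i j p hij']; exact zero_smul ℂ _
  have hz2 : (∑ e ∈ ndP P, Rdash i j (nI e.1) (pI e.2) • Rpm e.1 e.2) = 0 :=
    Finset.sum_eq_zero fun e _ => by rw [Rdash_np]; exact zero_smul ℂ _
  rw [hz1, hz2, zero_add, zero_add]
  have hmem : (i, j) ∈ dP P := mem_dP.mpr hd
  rw [Finset.sum_eq_single (i, j)]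
  · rw [Rdash_nn]; simp
  · intro e he hne
    rw [Rdash_nn]
    have : ¬ (j = e.2 ∧ i = e.1) := by
      rintro ⟨rfl, rfl⟩; exact hne (Prod.ext rfl rfl)
    simp [this]
  · intro hc; exact absurd hmem hc

theorem recon_eq (P : TypeCPoset n) (hacyc : P.cycles = ∅) :
    ∀ M ∈ Submodule.span ℂ (gcSet P), recon P M = M := by
  intro M hM
  induction hM using Submodule.span_induction with
  | mem M hMg =>
    rcases hMg with ⟨p, rfl⟩ | ⟨i, j, hdij, rfl⟩ | ⟨i, j, h1, h2, rfl⟩ | ⟨i, hl, rfl⟩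
    · exact recon_D P p
    · exact recon_Rdash P i j hdij
    · exact recon_Rpm P i j (ndRel_ne P hacyc h1) h1
    · exact absurd hl (noLoop P hacyc i)
  | zero => exact recon_zero P
  | add M N hM hN ihM ihN => rw [recon_add, ihM, ihN]
  | smul c M hM ih => rw [recon_smul, ih]

end Aux7

section Aux8

open TypeCPoset Matrix

variable {n : ℕ}

lemma RG_adj (P : TypeCPoset n) {p q : Pos n} :
    (RG P).Adj p q ↔ p ≠ q ∧ (P.lt (-p.val) q.val ∨ P.lt (-q.val) p.val ∨
      P.lt (-p.val) (-q.val) ∨ P.lt (-q.val) (-p.val)) := Iff.rfl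

lemma card_pos_eq : Fintype.card (Pos n) = n := by
  rw [Fintype.card_coe, Int.card_Icc]
  omega

lemma ndP_dP_disjoint (P : TypeCPoset n) (hP : P.HeightOne) :
    Disjoint (ndP P) (dP P) := by
  rw [Finset.disjoint_left]
  intro e he1 he2
  exact hP _ _ _ (mem_dP.mp he2) (mem_ndP.mp he1).2

lemma pos_ne_of_val {i j : Pos n} (h : i ≠ j) : i.val ≠ j.val :=
  fun hc => h (Subtype.ext hc)

lemma edge_count (P : TypeCPoset n) (hP : P.HeightOne)
    (hconn : (RG P).Connected) (hacyc : P.cycles = ∅) :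
    (ndP P).card + (dP P).card + 1 = n := by
  classical
  have hacyclic : (RG P).IsAcyclic := by
    intro v c hc
    have : c.edges.toFinset ∈ P.cycles := Or.inr ⟨v, c, hc, rfl⟩
    rw [hacyc] at this
    exact this
  have hTree : (RG P).IsTree := ⟨hconn, hacyclic⟩
  have htc := hTree.card_edgeFinset
  rw [card_pos_eq] at htc
  have hcard : ((ndP P) ∪ (dP P)).card = (RG P).edgeFinset.card := by
    apply Finset.card_bij (fun e _ => Sym2.mk e.1 e.2)
    · intro e he
      rw [SimpleGraph.mem_edgeFinset, SimpleGraph.mem_edgeSet]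
      rcases Finset.mem_union.mp he with h | h
      · obtain ⟨hlt, hrel⟩ := mem_ndP.mp h
        exact (RG_adj P).mpr ⟨fun hc => by rw [hc] at hlt; omega, Or.inl hrel⟩
      · have hrel := mem_dP.mp h
        have hlt := dRel_lt P hrel
        exact (RG_adj P).mpr ⟨fun hc => by rw [hc] at hlt; omega,
          Or.inr (Or.inr (Or.inr hrel))⟩
    · intro a ha b hb hab
      have hav : a.1.val < a.2.val := by
        rcases Finset.mem_union.mp ha with h | h
        exacts [ndP_lt h, dP_lt h]
      have hbv : b.1.val < b.2.val := by
        rcases Finset.mem_union.mp hb with h | h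
        exacts [ndP_lt h, dP_lt h]
      rcases Sym2.eq_iff.mp hab with ⟨h1, h2⟩ | ⟨h1, h2⟩
      · exact Prod.ext h1 h2
      · rw [h1, h2] at hav; omega
    · intro E hE
      induction E using Sym2.ind with
      | _ p q =>
        rw [SimpleGraph.mem_edgeFinset, SimpleGraph.mem_edgeSet] at hE
        obtain ⟨hpq, hrel⟩ := (RG_adj P).mp hE
        have hpqv : p.val ≠ q.val := pos_ne_of_val hpq
        rcases hrel with h | h | h | h
        · rcases lt_or_gt_of_ne hpqv with hlt | hlt
          · exact ⟨(p, q), Finset.mem_union_left _ (mem_ndP.mpr ⟨hlt, h⟩), rfl⟩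
          · exact ⟨(q, p), Finset.mem_union_left _ (mem_ndP.mpr ⟨hlt, nd_symm P hpqv h⟩),
              Sym2.eq_swap⟩
        · rcases lt_or_gt_of_ne hpqv with hlt | hlt
          · exact ⟨(p, q), Finset.mem_union_left _
              (mem_ndP.mpr ⟨hlt, nd_symm P (Ne.symm hpqv) h⟩), rfl⟩
          · exact ⟨(q, p), Finset.mem_union_left _ (mem_ndP.mpr ⟨hlt, h⟩), Sym2.eq_swap⟩
        · exact ⟨(q, p), Finset.mem_union_right _ (mem_dP.mpr h), Sym2.eq_swap⟩
        · exact ⟨(p, q), Finset.mem_union_right _ (mem_dP.mpr h), rfl⟩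
  rw [Finset.card_union_of_disjoint (ndP_dP_disjoint P hP)] at hcard
  omega

end Aux8

section Aux9

open TypeCPoset Matrix

variable {n : ℕ}

/-- Index type for the standard basis of `g_C(P)`. -/
abbrev BIdx (P : TypeCPoset n) : Type :=
  Pos n ⊕ ({e // e ∈ ndP P} ⊕ {e // e ∈ dP P})

/-- The standard basis family of `g_C(P)`. -/
noncomputable def bFam (P : TypeCPoset n) : BIdx P → Mat n
  | Sum.inl p => Dmat p
  | Sum.inr (Sum.inl e) => Rpm e.1.1 e.1.2
  | Sum.inr (Sum.inr e) => Rdash e.1.1 e.1.2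

lemma sumD_nn (c : Pos n → ℂ) (p : Pos n) :
    (∑ q : Pos n, c q • Dmat q) (nI p) (nI p) = c p := by
  rw [Matrix.sum_apply]
  have : ∀ q ∈ Finset.univ, (c q • Dmat q) (nI p) (nI p) = if q = p then c q else 0 := by
    intro q _
    rw [Matrix.smul_apply, Dmat_nn, smul_eq_mul, mul_ite, mul_one, mul_zero]
  rw [Finset.sum_congr rfl this, Finset.sum_ite_eq']
  simp

lemma sumD_np (c : Pos n → ℂ) (i j : Pos n) :
    (∑ q : Pos n, c q • Dmat q) (nI i) (pI j) = 0 := by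
  rw [Matrix.sum_apply]
  exact Finset.sum_eq_zero fun q _ => by rw [Matrix.smul_apply, Dmat_np, smul_zero]

lemma sumD_nn' (c : Pos n → ℂ) (i j : Pos n) (hij : i ≠ j) :
    (∑ q : Pos n, c q • Dmat q) (nI j) (nI i) = 0 := by
  rw [Matrix.sum_apply]
  exact Finset.sum_eq_zero fun q _ => by
    rw [Matrix.smul_apply, Dmat_nn' q i j hij, smul_zero]

lemma sumR_nn (P : TypeCPoset n) (c : {e // e ∈ ndP P} → ℂ) (k l : Pos n) :
    (∑ e : {e // e ∈ ndP P}, c e • Rpm e.1.1 e.1.2) (nI k) (nI l) = 0 := by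
  rw [Matrix.sum_apply]
  exact Finset.sum_eq_zero fun e _ => by rw [Matrix.smul_apply, Rpm_nn, smul_zero]

lemma sumR_np (P : TypeCPoset n) (c : {e // e ∈ ndP P} → ℂ) (e₀ : {e // e ∈ ndP P}) :
    (∑ e : {e // e ∈ ndP P}, c e • Rpm e.1.1 e.1.2) (nI e₀.1.1) (pI e₀.1.2) = c e₀ := by
  rw [Matrix.sum_apply]
  rw [Finset.sum_eq_single e₀]
  · rw [Matrix.smul_apply, Rpm_np _ _ _ _ (ndP_ne e₀.2)]
    simp
  · intro e _ hne
    rw [Matrix.smul_apply, Rpm_np _ _ _ _ (ndP_ne e.2)]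
    have : ¬ ((e.1.1 = e₀.1.1 ∧ e.1.2 = e₀.1.2) ∨ (e.1.2 = e₀.1.1 ∧ e.1.1 = e₀.1.2)) := by
      rintro (⟨h1, h2⟩ | ⟨h1, h2⟩)
      · exact hne (Subtype.ext (Prod.ext h1 h2))
      · have ha := ndP_lt e.2; have hb := ndP_lt e₀.2
        rw [← h1, ← h2] at hb; omega
    simp [this]
  · intro h; exact absurd (Finset.mem_univ e₀) h

lemma sumR_nd (P : TypeCPoset n) (c : {e // e ∈ ndP P} → ℂ) {e₀ : Pos n × Pos n}
    (he₀ : e₀ ∈ dP P) :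
    (∑ e : {e // e ∈ ndP P}, c e • Rpm e.1.1 e.1.2) (nI e₀.2) (nI e₀.1) = 0 := by
  rw [Matrix.sum_apply]
  exact Finset.sum_eq_zero fun e _ => by rw [Matrix.smul_apply, Rpm_nn, smul_zero]

lemma sumRd_np (P : TypeCPoset n) (c : {e // e ∈ dP P} → ℂ) (k l : Pos n) :
    (∑ e : {e // e ∈ dP P}, c e • Rdash e.1.1 e.1.2) (nI k) (pI l) = 0 := by
  rw [Matrix.sum_apply]
  exact Finset.sum_eq_zero fun e _ => by rw [Matrix.smul_apply, Rdash_np, smul_zero]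

lemma sumRd_diag (P : TypeCPoset n) (c : {e // e ∈ dP P} → ℂ) (p : Pos n) :
    (∑ e : {e // e ∈ dP P}, c e • Rdash e.1.1 e.1.2) (nI p) (nI p) = 0 := by
  rw [Matrix.sum_apply]
  exact Finset.sum_eq_zero fun e _ => by
    rw [Matrix.smul_apply, Rdash_diag _ _ _ (dP_ne e.2), smul_zero]

lemma sumRd_nn (P : TypeCPoset n) (c : {e // e ∈ dP P} → ℂ) (e₀ : {e // e ∈ dP P}) :
    (∑ e : {e // e ∈ dP P}, c e • Rdash e.1.1 e.1.2) (nI e₀.1.2) (nI e₀.1.1) = c e₀ := by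
  rw [Matrix.sum_apply]
  rw [Finset.sum_eq_single e₀]
  · rw [Matrix.smul_apply, Rdash_nn]
    simp
  · intro e _ hne
    rw [Matrix.smul_apply, Rdash_nn]
    have : ¬ (e.1.2 = e₀.1.2 ∧ e.1.1 = e₀.1.1) := by
      rintro ⟨h1, h2⟩
      exact hne (Subtype.ext (Prod.ext h2 h1))
    simp [this]
  · intro h; exact absurd (Finset.mem_univ e₀) h

lemma sumRd_nn_of_nd (P : TypeCPoset n) (c : {e // e ∈ dP P} → ℂ) {e₀ : Pos n × Pos n}
    (he₀ : e₀ ∈ ndP P) :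
    (∑ e : {e // e ∈ dP P}, c e • Rdash e.1.1 e.1.2) (nI e₀.1) (pI e₀.2) = 0 :=
  sumRd_np P c e₀.1 e₀.2

lemma bFam_split (P : TypeCPoset n) (g : BIdx P → ℂ) :
    (∑ i, g i • bFam P i)
      = (∑ p : Pos n, g (Sum.inl p) • Dmat p)
        + ((∑ e : {e // e ∈ ndP P}, g (Sum.inr (Sum.inl e)) • Rpm e.1.1 e.1.2)
          + (∑ e : {e // e ∈ dP P}, g (Sum.inr (Sum.inr e)) • Rdash e.1.1 e.1.2)) := by
  rw [Fintype.sum_sum_type, Fintype.sum_sum_type]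
  rfl

lemma bFam_indep (P : TypeCPoset n) : LinearIndependent ℂ (bFam P) := by
  rw [Fintype.linearIndependent_iff]
  intro g h
  rw [bFam_split] at h
  intro i
  match i with
  | Sum.inl p =>
    have hent : ((∑ p : Pos n, g (Sum.inl p) • Dmat p)
        + ((∑ e : {e // e ∈ ndP P}, g (Sum.inr (Sum.inl e)) • Rpm e.1.1 e.1.2)
          + (∑ e : {e // e ∈ dP P}, g (Sum.inr (Sum.inr e)) • Rdash e.1.1 e.1.2)))
        (nI p) (nI p) = 0 := by rw [h]; rfl
    rw [Matrix.add_apply, Matrix.add_apply, sumD_nn, sumR_nn, sumRd_diag] at hent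
    simpa using hent
  | Sum.inr (Sum.inl e) =>
    have hent : ((∑ p : Pos n, g (Sum.inl p) • Dmat p)
        + ((∑ e : {e // e ∈ ndP P}, g (Sum.inr (Sum.inl e)) • Rpm e.1.1 e.1.2)
          + (∑ e : {e // e ∈ dP P}, g (Sum.inr (Sum.inr e)) • Rdash e.1.1 e.1.2)))
        (nI e.1.1) (pI e.1.2) = 0 := by rw [h]; rfl
    rw [Matrix.add_apply, Matrix.add_apply, sumD_np, sumR_np,
        sumRd_nn_of_nd P _ e.2] at hent
    simpa using hent
  | Sum.inr (Sum.inr e) =>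
    have hent : ((∑ p : Pos n, g (Sum.inl p) • Dmat p)
        + ((∑ e : {e // e ∈ ndP P}, g (Sum.inr (Sum.inl e)) • Rpm e.1.1 e.1.2)
          + (∑ e : {e // e ∈ dP P}, g (Sum.inr (Sum.inr e)) • Rdash e.1.1 e.1.2)))
        (nI e.1.2) (nI e.1.1) = 0 := by rw [h]; rfl
    rw [Matrix.add_apply, Matrix.add_apply, sumD_nn' _ _ _ (dP_ne e.2),
        sumR_nd P _ e.2, sumRd_nn] at hent
    simpa using hent

lemma ndP_rel2 {P : TypeCPoset n} {e : Pos n × Pos n} (he : e ∈ ndP P) :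
    P.lt (-e.2.val) e.1.val :=
  nd_symm P (by have := ndP_lt he; omega) (mem_ndP.mp he).2

lemma bFam_span (P : TypeCPoset n) (hacyc : P.cycles = ∅) :
    Submodule.span ℂ (Set.range (bFam P)) = Submodule.span ℂ (gcSet P) := by
  apply le_antisymm
  · rw [Submodule.span_le]
    rintro _ ⟨i, rfl⟩
    apply Submodule.subset_span
    match i with
    | Sum.inl p => exact Or.inl ⟨p, rfl⟩
    | Sum.inr (Sum.inl e) =>
      exact Or.inr (Or.inr (Or.inl ⟨e.1.1, e.1.2, (mem_ndP.mp e.2).2, ndP_rel2 e.2, rfl⟩))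
    | Sum.inr (Sum.inr e) =>
      exact Or.inr (Or.inl ⟨e.1.1, e.1.2, mem_dP.mp e.2, rfl⟩)
  · rw [Submodule.span_le]
    intro M hM
    rcases hM with ⟨p, rfl⟩ | ⟨i, j, hdij, rfl⟩ | ⟨i, j, h1, h2, rfl⟩ | ⟨i, hl, rfl⟩
    · exact Submodule.subset_span ⟨Sum.inl p, rfl⟩
    · exact Submodule.subset_span ⟨Sum.inr (Sum.inr ⟨(i, j), mem_dP.mpr hdij⟩), rfl⟩
    · have hijv : i.val ≠ j.val := ndRel_ne P hacyc h1
      rcases lt_or_gt_of_ne hijv with hlt | hlt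
      · exact Submodule.subset_span ⟨Sum.inr (Sum.inl ⟨(i, j), mem_ndP.mpr ⟨hlt, h1⟩⟩), rfl⟩
      · have : Rpm i j = Rpm j i := Rpm_comm i j
        rw [this]
        exact Submodule.subset_span
          ⟨Sum.inr (Sum.inl ⟨(j, i), mem_ndP.mpr ⟨hlt, h2⟩⟩), rfl⟩
    · exact absurd hl (noLoop P hacyc i)

lemma finrank_span_gcSet (P : TypeCPoset n) (hacyc : P.cycles = ∅) :
    Module.finrank ℂ (Submodule.span ℂ (gcSet P))
      = Fintype.card (Pos n) + ((ndP P).card + (dP P).card) := by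
  rw [← bFam_span P hacyc, finrank_span_eq_card (bFam_indep P)]
  rw [Fintype.card_sum, Fintype.card_sum, Fintype.card_coe, Fintype.card_coe,
    Fintype.card_coe]

end Aux9

section Aux10

open TypeCPoset Matrix

variable {n : ℕ}

lemma kerS_vanish (P : TypeCPoset n) (hconn : (RG P).Connected) (p₀ : Pos n)
    (u : Pos n → ℂ)
    (hnd : ∀ e ∈ ndP P, u e.1 + u e.2 = 0)
    (hd : ∀ e ∈ dP P, u e.2 - u e.1 = 0)
    (h0 : u p₀ = 0) : ∀ p, u p = 0 := by
  have step : ∀ a b : Pos n, (RG P).Adj a b → u a = 0 → u b = 0 := by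
    intro a b hadj ha
    obtain ⟨hne, hrel⟩ := (RG_adj P).mp hadj
    have hnev : a.val ≠ b.val := pos_ne_of_val hne
    rcases hrel with h | h | h | h
    · rcases lt_or_gt_of_ne hnev with hlt | hlt
      · have hh := hnd (a, b) (mem_ndP.mpr ⟨hlt, h⟩)
        simp only at hh; linear_combination hh - ha
      · have hh := hnd (b, a) (mem_ndP.mpr ⟨hlt, nd_symm P hnev h⟩)
        simp only at hh; linear_combination hh - ha
    · rcases lt_or_gt_of_ne hnev with hlt | hlt
      · have hh := hnd (a, b) (mem_ndP.mpr ⟨hlt, nd_symm P (Ne.symm hnev) h⟩)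
        simp only at hh; linear_combination hh - ha
      · have hh := hnd (b, a) (mem_ndP.mpr ⟨hlt, h⟩)
        simp only at hh; linear_combination hh - ha
    · have hh := hd (b, a) (mem_dP.mpr h)
      simp only at hh; linear_combination ha - hh
    · have hh := hd (a, b) (mem_dP.mpr h)
      simp only at hh; linear_combination hh + ha
  have key : ∀ (a b : Pos n) (w : (RG P).Walk a b), u a = 0 → u b = 0 := by
    intro a b w
    induction w with
    | nil => exact id
    | cons hadj w ih => intro ha; exact ih (step _ _ hadj ha)
  intro p
  obtain ⟨w⟩ := hconn.preconnected p₀ p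
  exact key p₀ p w h0

/-- The "incidence" linear map of `RG(P)`. -/
noncomputable def Smap (P : TypeCPoset n) :
    (Pos n → ℂ) →ₗ[ℂ] (({e // e ∈ ndP P} ⊕ {e // e ∈ dP P}) → ℂ) where
  toFun u := Sum.elim (fun e => u e.1.1 + u e.1.2) (fun e => u e.1.2 - u e.1.1)
  map_add' u v := by
    funext i
    cases i <;> simp <;> ring
  map_smul' c u := by
    funext i
    cases i <;> simp <;> ring

lemma Smap_ker_facts (P : TypeCPoset n) (u : Pos n → ℂ) (hu : Smap P u = 0) :
    (∀ e ∈ ndP P, u e.1 + u e.2 = 0) ∧ (∀ e ∈ dP P, u e.2 - u e.1 = 0) := by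
  constructor
  · intro e he
    exact congrFun hu (Sum.inl ⟨e, he⟩)
  · intro e he
    exact congrFun hu (Sum.inr ⟨e, he⟩)

lemma finrank_dom : Module.finrank ℂ (Pos n → ℂ) = Fintype.card (Pos n) :=
  Module.finrank_pi ℂ

lemma exists_t (P : TypeCPoset n) (hP : P.HeightOne) (hconn : (RG P).Connected)
    (hacyc : P.cycles = ∅) (p₀ : Pos n) :
    ∃ t : Pos n → ℂ, Smap P t = 0 ∧ t p₀ ≠ 0 := by
  have hedge := edge_count P hP hconn hacyc
  have hrank := LinearMap.finrank_range_add_finrank_ker (Smap P)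
  rw [finrank_dom, card_pos_eq] at hrank
  have hcod : Module.finrank ℂ (({e // e ∈ ndP P} ⊕ {e // e ∈ dP P}) → ℂ)
      = (ndP P).card + (dP P).card := by
    rw [Module.finrank_pi ℂ, Fintype.card_sum, Fintype.card_coe, Fintype.card_coe]
  have hle : Module.finrank ℂ (LinearMap.range (Smap P)) ≤ (ndP P).card + (dP P).card := by
    rw [← hcod]; exact (LinearMap.range (Smap P)).finrank_le
  have hker_pos : 1 ≤ Module.finrank ℂ (LinearMap.ker (Smap P)) := by omega
  have hne_bot : LinearMap.ker (Smap P) ≠ ⊥ := by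
    intro hc
    rw [hc, finrank_bot] at hker_pos
    omega
  obtain ⟨t, ht, htne⟩ := Submodule.exists_mem_ne_zero_of_ne_bot hne_bot
  refine ⟨t, ht, ?_⟩
  intro hc
  obtain ⟨hnd, hd⟩ := Smap_ker_facts P t ht
  have : ∀ p, t p = 0 := kerS_vanish P hconn p₀ t hnd hd hc
  exact htne (funext this)

lemma Smap_surj (P : TypeCPoset n) (hP : P.HeightOne) (hconn : (RG P).Connected)
    (hacyc : P.cycles = ∅) : LinearMap.range (Smap P) = ⊤ := by
  have hedge := edge_count P hP hconn hacyc
  -- evaluation at an arbitrary vertex is injective on the kernel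
  obtain ⟨q₀⟩ := hconn.nonempty
  have hinj : Function.Injective
      ((LinearMap.proj (R := ℂ) (φ := fun _ : Pos n => ℂ) q₀).comp
        (Submodule.subtype (LinearMap.ker (Smap P)))) := by
    rw [← LinearMap.ker_eq_bot, LinearMap.ker_eq_bot']
    intro x hx
    obtain ⟨hnd, hd⟩ := Smap_ker_facts P x.1 x.2
    have hx0 : x.1 q₀ = 0 := hx
    have : ∀ p, x.1 p = 0 := kerS_vanish P hconn q₀ x.1 hnd hd hx0
    exact Subtype.ext (funext this)
  have hker_le : Module.finrank ℂ (LinearMap.ker (Smap P)) ≤ 1 := by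
    have := LinearMap.finrank_le_finrank_of_injective hinj
    simpa using this
  have hrank := LinearMap.finrank_range_add_finrank_ker (Smap P)
  rw [finrank_dom, card_pos_eq] at hrank
  have hcod : Module.finrank ℂ (({e // e ∈ ndP P} ⊕ {e // e ∈ dP P}) → ℂ)
      = (ndP P).card + (dP P).card := by
    rw [Module.finrank_pi ℂ, Fintype.card_sum, Fintype.card_coe, Fintype.card_coe]
  apply Submodule.eq_top_of_finrank_eq
  rw [hcod]
  have hle : Module.finrank ℂ (LinearMap.range (Smap P)) ≤ (ndP P).card + (dP P).card := by
    rw [← hcod]; exact (LinearMap.range (Smap P)).finrank_le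
  omega

lemma pairing (P : TypeCPoset n) (u : Pos n → ℂ) (bnd bd : Pos n × Pos n → ℂ) :
    (∑ p : Pos n, u p *
      ((∑ e ∈ ndP P, ((if p = e.1 then 1 else 0) + (if p = e.2 then 1 else 0)) * bnd e)
        + (∑ e ∈ dP P, ((if p = e.2 then 1 else 0) - (if p = e.1 then 1 else 0)) * bd e)))
      = (∑ e ∈ ndP P, (u e.1 + u e.2) * bnd e) + (∑ e ∈ dP P, (u e.2 - u e.1) * bd e) := by
  simp only [mul_add, Finset.sum_add_distrib, Finset.mul_sum]
  congr 1
  · rw [Finset.sum_comm]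
    refine Finset.sum_congr rfl fun e _ => ?_
    have : ∀ p ∈ Finset.univ, u p *
        (((if p = e.1 then (1:ℂ) else 0) + (if p = e.2 then 1 else 0)) * bnd e)
        = ((if p = e.1 then u p else 0) + (if p = e.2 then u p else 0)) * bnd e := by
      intro p _
      split_ifs <;> ring
    rw [Finset.sum_congr rfl this, ← Finset.sum_mul, Finset.sum_add_distrib,
        Finset.sum_ite_eq', Finset.sum_ite_eq']
    simp
  · rw [Finset.sum_comm]
    refine Finset.sum_congr rfl fun e _ => ?_
    have : ∀ p ∈ Finset.univ, u p *
        (((if p = e.2 then (1:ℂ) else 0) - (if p = e.1 then 1 else 0)) * bd e)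
        = ((if p = e.2 then u p else 0) - (if p = e.1 then u p else 0)) * bd e := by
      intro p _
      split_ifs <;> ring
    rw [Finset.sum_congr rfl this, ← Finset.sum_mul, Finset.sum_sub_distrib,
        Finset.sum_ite_eq', Finset.sum_ite_eq']
    simp

end Aux10

section Aux11

open TypeCPoset Matrix

variable {n : ℕ}

lemma psiL_apply (P : TypeCPoset n) (p₀ : Pos n) (M : Mat n) :
    psiL P p₀ M = M (nI p₀) (nI p₀) + ((∑ e ∈ ndP P, M (nI e.1) (pI e.2))
      + (∑ e ∈ dP P, M (nI e.2) (nI e.1))) := rfl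

lemma Fform_sub_right (P : TypeCPoset n) (x y y' : Mat n) :
    Fform P x (y - y') = Fform P x y - Fform P x y' := by
  rw [sub_eq_add_neg, Fform_add_right, ← neg_one_smul ℂ y', Fform_smul_right]
  ring

lemma Fform_M_D (P : TypeCPoset n) (M : Mat n) (p : Pos n) :
    Fform P M (Dmat p)
      = -((∑ e ∈ ndP P, ((if p = e.1 then 1 else 0) + (if p = e.2 then 1 else 0))
            * M (nI e.1) (pI e.2))
        + (∑ e ∈ dP P, ((if p = e.2 then 1 else 0) - (if p = e.1 then 1 else 0))
            * M (nI e.2) (nI e.1))) := by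
  unfold Fform
  rw [neg_add, ← Finset.sum_neg_distrib, ← Finset.sum_neg_distrib]
  congr 1
  · refine Finset.sum_congr rfl fun e he => ?_
    rw [Dmat_np, Dmat_nn, Dmat_nn]; ring
  · refine Finset.sum_congr rfl fun e he => ?_
    rw [Dmat_nn' p e.1 e.2 (dP_ne he), Dmat_nn, Dmat_nn]; ring

lemma Fform_M_Rpm (P : TypeCPoset n) (M : Mat n) {e₀ : Pos n × Pos n}
    (he₀ : e₀ ∈ ndP P) :
    Fform P M (Rpm e₀.1 e₀.2)
      = M (nI e₀.1) (nI e₀.1) + M (nI e₀.2) (nI e₀.2) := by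
  have hne := ndP_ne he₀
  unfold Fform
  have hz : (∑ e ∈ dP P, ((M (nI e.2) (nI e.2) - M (nI e.1) (nI e.1))
      * Rpm e₀.1 e₀.2 (nI e.2) (nI e.1)
      - (Rpm e₀.1 e₀.2 (nI e.2) (nI e.2) - Rpm e₀.1 e₀.2 (nI e.1) (nI e.1))
      * M (nI e.2) (nI e.1))) = 0 := by
    refine Finset.sum_eq_zero fun e _ => ?_
    rw [Rpm_nn, Rpm_nn, Rpm_nn]; ring
  rw [hz, add_zero]
  rw [Finset.sum_eq_single e₀]
  · rw [Rpm_np _ _ _ _ hne, Rpm_nn, Rpm_nn]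
    simp
  · intro e he hnee
    rw [Rpm_np _ _ _ _ hne, Rpm_nn, Rpm_nn]
    have : ¬ ((e₀.1 = e.1 ∧ e₀.2 = e.2) ∨ (e₀.2 = e.1 ∧ e₀.1 = e.2)) := by
      rintro (⟨h1, h2⟩ | ⟨h1, h2⟩)
      · exact hnee (Prod.ext h1.symm h2.symm)
      · have ha := ndP_lt he; have hb := ndP_lt he₀
        rw [← h1, ← h2] at ha; omega
    simp [this]
  · intro hc; exact absurd he₀ hc

lemma Fform_M_Rdash (P : TypeCPoset n) (M : Mat n) {e₀ : Pos n × Pos n}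
    (he₀ : e₀ ∈ dP P) :
    Fform P M (Rdash e₀.1 e₀.2)
      = M (nI e₀.2) (nI e₀.2) - M (nI e₀.1) (nI e₀.1) := by
  have hne := dP_ne he₀
  unfold Fform
  have hz : (∑ e ∈ ndP P, ((M (nI e.1) (nI e.1) + M (nI e.2) (nI e.2))
      * Rdash e₀.1 e₀.2 (nI e.1) (pI e.2)
      - (Rdash e₀.1 e₀.2 (nI e.1) (nI e.1) + Rdash e₀.1 e₀.2 (nI e.2) (nI e.2))
      * M (nI e.1) (pI e.2))) = 0 := by
    refine Finset.sum_eq_zero fun e _ => ?_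
    rw [Rdash_np, Rdash_diag _ _ _ hne, Rdash_diag _ _ _ hne]; ring
  rw [hz, zero_add]
  rw [Finset.sum_eq_single e₀]
  · rw [Rdash_nn, Rdash_diag _ _ _ hne, Rdash_diag _ _ _ hne]
    simp
  · intro e he hnee
    rw [Rdash_nn, Rdash_diag _ _ _ hne, Rdash_diag _ _ _ hne]
    have : ¬ (e₀.2 = e.2 ∧ e₀.1 = e.1) := by
      rintro ⟨h1, h2⟩
      exact hnee (Prod.ext h2.symm h1.symm)
    simp [this]
  · intro hc; exact absurd he₀ hc

variable (P : TypeCPoset n) (g : LieSubalgebra ℂ (Mat n))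

lemma memD (hg : g.toSubmodule = Submodule.span ℂ (gcSet P)) (p : Pos n) :
    Dmat p ∈ g := by
  have h : Dmat p ∈ Submodule.span ℂ (gcSet P) :=
    Submodule.subset_span (Or.inl ⟨p, rfl⟩)
  rw [← hg] at h
  exact h

lemma memR (hg : g.toSubmodule = Submodule.span ℂ (gcSet P)) {e : Pos n × Pos n}
    (he : e ∈ ndP P) : Rpm e.1 e.2 ∈ g := by
  have h : Rpm e.1 e.2 ∈ Submodule.span ℂ (gcSet P) :=
    Submodule.subset_span (Or.inr (Or.inr (Or.inl
      ⟨e.1, e.2, (mem_ndP.mp he).2, ndP_rel2 he, rfl⟩)))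
  rw [← hg] at h
  exact h

lemma memRd (hg : g.toSubmodule = Submodule.span ℂ (gcSet P)) {e : Pos n × Pos n}
    (he : e ∈ dP P) : Rdash e.1 e.2 ∈ g := by
  have h : Rdash e.1 e.2 ∈ Submodule.span ℂ (gcSet P) :=
    Submodule.subset_span (Or.inr (Or.inl ⟨e.1, e.2, mem_dP.mp he, rfl⟩))
  rw [← hg] at h
  exact h

lemma mem_span_of_g (hg : g.toSubmodule = Submodule.span ℂ (gcSet P)) (z : ↥g) :
    (z : Mat n) ∈ Submodule.span ℂ (gcSet P) := by
  have h : (z : Mat n) ∈ g.toSubmodule := z.2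
  rw [hg] at h
  exact h

lemma finrank_g (hacyc : P.cycles = ∅)
    (hg : g.toSubmodule = Submodule.span ℂ (gcSet P)) :
    Module.finrank ℂ ↥g = Fintype.card (Pos n) + ((ndP P).card + (dP P).card) := by
  have h0 : Module.finrank ℂ ↥g = Module.finrank ℂ ↥g.toSubmodule := rfl
  rw [h0, congrArg (fun S : Submodule ℂ (Mat n) => Module.finrank ℂ ↥S) hg]
  exact finrank_span_gcSet P hacyc

end Aux11

section Aux12

open TypeCPoset Matrix

variable {n : ℕ}

/-- `Sᵀb` at a vertex, where `b` is given by the edge coordinates of `M`. -/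
noncomputable def Tfun (P : TypeCPoset n) (M : Mat n) (p : Pos n) : ℂ :=
  (∑ e ∈ ndP P, ((if p = e.1 then 1 else 0) + (if p = e.2 then 1 else 0))
      * M (nI e.1) (pI e.2))
  + (∑ e ∈ dP P, ((if p = e.2 then 1 else 0) - (if p = e.1 then 1 else 0))
      * M (nI e.2) (nI e.1))

lemma Fform_M_D' (P : TypeCPoset n) (M : Mat n) (p : Pos n) :
    Fform P M (Dmat p) = -(Tfun P M p) :=
  Fform_M_D P M p

lemma pairing' (P : TypeCPoset n) (u : Pos n → ℂ) (M : Mat n) :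
    (∑ p : Pos n, u p * Tfun P M p)
      = (∑ e ∈ ndP P, (u e.1 + u e.2) * M (nI e.1) (pI e.2))
        + (∑ e ∈ dP P, (u e.2 - u e.1) * M (nI e.2) (nI e.1)) :=
  pairing P u _ _

lemma master (P : TypeCPoset n) (hP : P.HeightOne)
    (hconn : (RG P).Connected) (hacyc : P.cycles = ∅)
    (hV : 1 < Fintype.card (Pos n)) (p₀ : Pos n)
    (g : LieSubalgebra ℂ (Mat n))
    (hg : g.toSubmodule = Submodule.span ℂ (gcSet P))
    (φ : Module.Dual ℂ ↥g) (hφ : ∀ x : ↥g, φ x = psiL P p₀ (x : Mat n)) :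
    IsContactForm ↥g φ := by
  have hedge := edge_count P hP hconn hacyc
  have hn : 2 ≤ n := by rw [card_pos_eq] at hV; omega
  constructor
  · rw [finrank_g P g hacyc hg, card_pos_eq]
    exact ⟨n - 1, by omega⟩
  · intro x hx0 hxy
    have hMspan : (x : Mat n) ∈ Submodule.span ℂ (gcSet P) := mem_span_of_g P g hg x
    have hbr : ∀ y : ↥g, φ ⁅x, y⁆ = Fform P (x : Mat n) (y : Mat n) := by
      intro y
      rw [hφ, LieSubalgebra.coe_bracket]
      exact psi_lie_eq_Fform P hP hacyc p₀ _ hMspan _ (mem_span_of_g P g hg y)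
    have hF : ∀ y : ↥g, φ y = 0 → Fform P (x : Mat n) (y : Mat n) = 0 := by
      intro y hy
      rw [← hbr y]; exact hxy y hy
    have hT0 : ∀ p : Pos n, p ≠ p₀ → Tfun P (x : Mat n) p = 0 := by
      intro p hp
      have hy : φ (⟨Dmat p, memD P g hg p⟩ : ↥g) = 0 := by
        rw [hφ]
        show psiL P p₀ (Dmat p) = 0
        rw [psiL_D]; simp [hp]
      have h := hF _ hy
      have h2 : Fform P (x : Mat n) (Dmat p) = -(Tfun P (x : Mat n) p) :=
        Fform_M_D' P _ p
      rw [h2] at h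
      exact neg_eq_zero.mp h
    -- kill T at p₀ using the kernel vector t
    obtain ⟨t, htker, htp₀⟩ := exists_t P hP hconn hacyc p₀
    obtain ⟨htnd, htd⟩ := Smap_ker_facts P t htker
    have hsum0 : (∑ p : Pos n, t p * Tfun P (x : Mat n) p) = 0 := by
      rw [pairing']
      have h1 : (∑ e ∈ ndP P, (t e.1 + t e.2) * (x : Mat n) (nI e.1) (pI e.2)) = 0 :=
        Finset.sum_eq_zero fun e he => by rw [htnd e he, zero_mul]
      have h2 : (∑ e ∈ dP P, (t e.2 - t e.1) * (x : Mat n) (nI e.2) (nI e.1)) = 0 :=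
        Finset.sum_eq_zero fun e he => by rw [htd e he, zero_mul]
      rw [h1, h2, add_zero]
    have hsingle : (∑ p : Pos n, t p * Tfun P (x : Mat n) p)
        = t p₀ * Tfun P (x : Mat n) p₀ := by
      rw [Finset.sum_eq_single p₀]
      · intro p _ hp; rw [hT0 p hp, mul_zero]
      · intro hc; exact absurd (Finset.mem_univ p₀) hc
    have hTp₀ : Tfun P (x : Mat n) p₀ = 0 := by
      rcases mul_eq_zero.mp (hsingle ▸ hsum0) with h | h
      · exact absurd h htp₀
      · exact h
    have hTall : ∀ p, Tfun P (x : Mat n) p = 0 := by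
      intro p
      by_cases hp : p = p₀
      · rw [hp]; exact hTp₀
      · exact hT0 p hp
    -- edge coordinates of x vanish
    have hsurj := LinearMap.range_eq_top.mp (Smap_surj P hP hconn hacyc)
    have hzero_pair : ∀ u : Pos n → ℂ,
        (∑ e ∈ ndP P, (u e.1 + u e.2) * (x : Mat n) (nI e.1) (pI e.2))
          + (∑ e ∈ dP P, (u e.2 - u e.1) * (x : Mat n) (nI e.2) (nI e.1)) = 0 := by
      intro u
      rw [← pairing']
      exact Finset.sum_eq_zero fun p _ => by rw [hTall p, mul_zero]
    have hbnd : ∀ e₀ ∈ ndP P, (x : Mat n) (nI e₀.1) (pI e₀.2) = 0 := by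
      intro e₀ he₀
      obtain ⟨u, hu⟩ := hsurj (Pi.single (Sum.inl ⟨e₀, he₀⟩) 1)
      have hz := hzero_pair u
      have hr1 : (∑ e ∈ ndP P, (u e.1 + u e.2) * (x : Mat n) (nI e.1) (pI e.2))
          = (x : Mat n) (nI e₀.1) (pI e₀.2) := by
        rw [← Finset.sum_attach (ndP P)
          (fun e => (u e.1 + u e.2) * (x : Mat n) (nI e.1) (pI e.2))]
        have hterm : ∀ e ∈ (ndP P).attach,
            (u (e : Pos n × Pos n).1 + u (e : Pos n × Pos n).2)
              * (x : Mat n) (nI (e : Pos n × Pos n).1) (pI (e : Pos n × Pos n).2)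
            = if e = (⟨e₀, he₀⟩ : {z // z ∈ ndP P})
                then (x : Mat n) (nI e₀.1) (pI e₀.2) else 0 := by
          intro e _
          have hs : u (e : Pos n × Pos n).1 + u (e : Pos n × Pos n).2
              = Smap P u (Sum.inl e) := rfl
          rw [hs, hu, Pi.single_apply]
          by_cases he : e = (⟨e₀, he₀⟩ : {z // z ∈ ndP P})
          · rw [he]; simp
          · have hne : (Sum.inl e : {z // z ∈ ndP P} ⊕ {z // z ∈ dP P})
                ≠ Sum.inl ⟨e₀, he₀⟩ := by simpa using he
            simp [hne, he]
        rw [Finset.sum_congr rfl hterm, Finset.sum_ite_eq' ((ndP P).attach)]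
        simp
      have hr2 : (∑ e ∈ dP P, (u e.2 - u e.1) * (x : Mat n) (nI e.2) (nI e.1)) = 0 := by
        rw [← Finset.sum_attach (dP P)
          (fun e => (u e.2 - u e.1) * (x : Mat n) (nI e.2) (nI e.1))]
        refine Finset.sum_eq_zero fun e _ => ?_
        have hs : u (e : Pos n × Pos n).2 - u (e : Pos n × Pos n).1
            = Smap P u (Sum.inr e) := rfl
        rw [hs, hu, Pi.single_apply]
        simp
      rw [hr1, hr2, add_zero] at hz
      exact hz
    have hbd : ∀ e₀ ∈ dP P, (x : Mat n) (nI e₀.2) (nI e₀.1) = 0 := by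
      intro e₀ he₀
      obtain ⟨u, hu⟩ := hsurj (Pi.single (Sum.inr ⟨e₀, he₀⟩) 1)
      have hz := hzero_pair u
      have hr1 : (∑ e ∈ ndP P, (u e.1 + u e.2) * (x : Mat n) (nI e.1) (pI e.2)) = 0 := by
        rw [← Finset.sum_attach (ndP P)
          (fun e => (u e.1 + u e.2) * (x : Mat n) (nI e.1) (pI e.2))]
        refine Finset.sum_eq_zero fun e _ => ?_
        have hs : u (e : Pos n × Pos n).1 + u (e : Pos n × Pos n).2
            = Smap P u (Sum.inl e) := rfl
        rw [hs, hu, Pi.single_apply]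
        simp
      have hr2 : (∑ e ∈ dP P, (u e.2 - u e.1) * (x : Mat n) (nI e.2) (nI e.1))
          = (x : Mat n) (nI e₀.2) (nI e₀.1) := by
        rw [← Finset.sum_attach (dP P)
          (fun e => (u e.2 - u e.1) * (x : Mat n) (nI e.2) (nI e.1))]
        have hterm : ∀ e ∈ (dP P).attach,
            (u (e : Pos n × Pos n).2 - u (e : Pos n × Pos n).1)
              * (x : Mat n) (nI (e : Pos n × Pos n).2) (nI (e : Pos n × Pos n).1)
            = if e = (⟨e₀, he₀⟩ : {z // z ∈ dP P})
                then (x : Mat n) (nI e₀.2) (nI e₀.1) else 0 := by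
          intro e _
          have hs : u (e : Pos n × Pos n).2 - u (e : Pos n × Pos n).1
              = Smap P u (Sum.inr e) := rfl
          rw [hs, hu, Pi.single_apply]
          by_cases he : e = (⟨e₀, he₀⟩ : {z // z ∈ dP P})
          · rw [he]; simp
          · have hne : (Sum.inr e : {z // z ∈ ndP P} ⊕ {z // z ∈ dP P})
                ≠ Sum.inr ⟨e₀, he₀⟩ := by simpa using he
            simp [hne, he]
        rw [Finset.sum_congr rfl hterm, Finset.sum_ite_eq' ((dP P).attach)]
        simp
      rw [hr1, hr2, zero_add] at hz
      exact hz
    -- the diagonal coordinates satisfy the kernel relations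
    have hand : ∀ e ∈ ndP P,
        (x : Mat n) (nI e.1) (nI e.1) + (x : Mat n) (nI e.2) (nI e.2) = 0 := by
      intro e he
      have hrel := (mem_ndP.mp he).2
      have hy : φ ((⟨Dmat p₀, memD P g hg p₀⟩ : ↥g) - ⟨Rpm e.1 e.2, memR P g hg he⟩) = 0 := by
        rw [hφ]
        have hcoe : (((⟨Dmat p₀, memD P g hg p₀⟩ : ↥g) - ⟨Rpm e.1 e.2, memR P g hg he⟩ : ↥g)
            : Mat n) = Dmat p₀ - Rpm e.1 e.2 := rfl
        rw [hcoe, map_sub, psiL_D, psiL_Rpm P p₀ e.1 e.2 (by have := ndP_lt he; omega) hrel]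
        simp
      have h := hF _ hy
      have hcoe : (((⟨Dmat p₀, memD P g hg p₀⟩ : ↥g) - ⟨Rpm e.1 e.2, memR P g hg he⟩ : ↥g)
          : Mat n) = Dmat p₀ - Rpm e.1 e.2 := rfl
      rw [hcoe, Fform_sub_right, Fform_M_D' P _ p₀, hTp₀, Fform_M_Rpm P _ he] at h
      linear_combination -h
    have hadd : ∀ e ∈ dP P,
        (x : Mat n) (nI e.2) (nI e.2) - (x : Mat n) (nI e.1) (nI e.1) = 0 := by
      intro e he
      have hrel := mem_dP.mp he
      have hy : φ ((⟨Dmat p₀, memD P g hg p₀⟩ : ↥g) - ⟨Rdash e.1 e.2, memRd P g hg he⟩) = 0 := by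
        rw [hφ]
        have hcoe : (((⟨Dmat p₀, memD P g hg p₀⟩ : ↥g) - ⟨Rdash e.1 e.2, memRd P g hg he⟩ : ↥g)
            : Mat n) = Dmat p₀ - Rdash e.1 e.2 := rfl
        rw [hcoe, map_sub, psiL_D, psiL_Rdash P p₀ e.1 e.2 hrel]
        simp
      have h := hF _ hy
      have hcoe : (((⟨Dmat p₀, memD P g hg p₀⟩ : ↥g) - ⟨Rdash e.1 e.2, memRd P g hg he⟩ : ↥g)
          : Mat n) = Dmat p₀ - Rdash e.1 e.2 := rfl
      rw [hcoe, Fform_sub_right, Fform_M_D' P _ p₀, hTp₀, Fform_M_Rdash P _ he] at h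
      linear_combination -h
    -- diagonal coordinate at p₀ vanishes
    have hpsix : psiL P p₀ (x : Mat n) = 0 := by rw [← hφ x]; exact hx0
    have hap₀ : (x : Mat n) (nI p₀) (nI p₀) = 0 := by
      rw [psiL_apply, Finset.sum_eq_zero hbnd, Finset.sum_eq_zero hbd] at hpsix
      simpa using hpsix
    have ha : ∀ p, (x : Mat n) (nI p) (nI p) = 0 :=
      kerS_vanish P hconn p₀ _ hand hadd hap₀
    -- conclude x = 0
    have hM0 : (x : Mat n) = 0 := by
      have hrec := recon_eq P hacyc _ hMspan
      rw [← hrec]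
      unfold recon
      have h1 : (∑ p : Pos n, (x : Mat n) (nI p) (nI p) • Dmat p) = 0 :=
        Finset.sum_eq_zero fun p _ => by rw [ha p, zero_smul]
      have h2 : (∑ e ∈ ndP P, (x : Mat n) (nI e.1) (pI e.2) • Rpm e.1 e.2) = 0 :=
        Finset.sum_eq_zero fun e he => by rw [hbnd e he, zero_smul]
      have h3 : (∑ e ∈ dP P, (x : Mat n) (nI e.2) (nI e.1) • Rdash e.1 e.2) = 0 :=
        Finset.sum_eq_zero fun e he => by rw [hbd e he, zero_smul]
      rw [h1, h2, h3, add_zero, add_zero]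
    exact Subtype.ext hM0

end Aux12

section Aux13

open TypeCPoset Matrix

variable {n : ℕ}

/-- The contact form on `g`, obtained by restricting `psiL`. -/
noncomputable def Psi (P : TypeCPoset n) (p₀ : Pos n) (g : LieSubalgebra ℂ (Mat n)) :
    Module.Dual ℂ ↥g where
  toFun x := psiL P p₀ (x : Mat n)
  map_add' x y := map_add (psiL P p₀) (x : Mat n) (y : Mat n)
  map_smul' c x := map_smul (psiL P p₀) c (x : Mat n)

lemma phi_det (P : TypeCPoset n) (hacyc : P.cycles = ∅) (p₀ : Pos n)
    (g : LieSubalgebra ℂ (Mat n))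
    (hg : g.toSubmodule = Submodule.span ℂ (gcSet P))
    (φ : Module.Dual ℂ ↥g)
    (h1 : ∀ x : ↥g, (x : Mat n) = Dmat p₀ → φ x = 1)
    (h2 : ∀ (x : ↥g) (i : Pos n), i ≠ p₀ → (x : Mat n) = Dmat i → φ x = 0)
    (h3 : ∀ (x : ↥g) (i j : Pos n), P.lt (-i.val) j.val → P.lt (-j.val) i.val →
        (x : Mat n) = Rpm i j → φ x = 1)
    (h4 : ∀ (x : ↥g) (i j : Pos n), i.val < j.val → P.lt (-j.val) (-i.val) →
        (x : Mat n) = Rdash i j → φ x = 1) :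
    ∀ x : ↥g, φ x = psiL P p₀ (x : Mat n) := by
  intro x
  set X : ↥g :=
    (∑ p : Pos n, (x : Mat n) (nI p) (nI p) • (⟨Dmat p, memD P g hg p⟩ : ↥g))
    + ((∑ e : {z // z ∈ ndP P},
        (x : Mat n) (nI (e : Pos n × Pos n).1) (pI (e : Pos n × Pos n).2)
          • (⟨Rpm (e : Pos n × Pos n).1 (e : Pos n × Pos n).2, memR P g hg e.2⟩ : ↥g))
      + (∑ e : {z // z ∈ dP P},
        (x : Mat n) (nI (e : Pos n × Pos n).2) (nI (e : Pos n × Pos n).1)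
          • (⟨Rdash (e : Pos n × Pos n).1 (e : Pos n × Pos n).2, memRd P g hg e.2⟩ : ↥g)))
    with hXdef
  have hXcoe : (X : Mat n) = recon P (x : Mat n) := by
    rw [hXdef]
    rw [show ((
      (∑ p : Pos n, (x : Mat n) (nI p) (nI p) • (⟨Dmat p, memD P g hg p⟩ : ↥g))
      + ((∑ e : {z // z ∈ ndP P},
          (x : Mat n) (nI (e : Pos n × Pos n).1) (pI (e : Pos n × Pos n).2)
            • (⟨Rpm (e : Pos n × Pos n).1 (e : Pos n × Pos n).2, memR P g hg e.2⟩ : ↥g))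
        + (∑ e : {z // z ∈ dP P},
          (x : Mat n) (nI (e : Pos n × Pos n).2) (nI (e : Pos n × Pos n).1)
            • (⟨Rdash (e : Pos n × Pos n).1 (e : Pos n × Pos n).2, memRd P g hg e.2⟩ : ↥g)))
      : ↥g) : Mat n)
      = (∑ p : Pos n, (x : Mat n) (nI p) (nI p) • Dmat p)
        + ((∑ e : {z // z ∈ ndP P},
            (x : Mat n) (nI (e : Pos n × Pos n).1) (pI (e : Pos n × Pos n).2)
              • Rpm (e : Pos n × Pos n).1 (e : Pos n × Pos n).2)
          + (∑ e : {z // z ∈ dP P},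
            (x : Mat n) (nI (e : Pos n × Pos n).2) (nI (e : Pos n × Pos n).1)
              • Rdash (e : Pos n × Pos n).1 (e : Pos n × Pos n).2)) from by
      push_cast [AddSubmonoidClass.coe_finset_sum]
      rfl]
    unfold recon
    rw [Finset.sum_coe_sort (ndP P)
        (fun e => (x : Mat n) (nI e.1) (pI e.2) • Rpm e.1 e.2),
      Finset.sum_coe_sort (dP P)
        (fun e => (x : Mat n) (nI e.2) (nI e.1) • Rdash e.1 e.2)]
    rw [add_assoc]
  have hX : x = X :=
    Subtype.ext (by rw [hXcoe, recon_eq P hacyc _ (mem_span_of_g P g hg x)])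
  have hvalD : ∀ p : Pos n, φ (⟨Dmat p, memD P g hg p⟩ : ↥g)
      = if p = p₀ then 1 else 0 := by
    intro p
    by_cases hp : p = p₀
    · subst hp; rw [if_pos rfl]; exact h1 _ rfl
    · rw [if_neg hp]; exact h2 _ p hp rfl
  have hvalR : ∀ e : {z // z ∈ ndP P},
      φ (⟨Rpm (e : Pos n × Pos n).1 (e : Pos n × Pos n).2, memR P g hg e.2⟩ : ↥g) = 1 :=
    fun e => h3 _ _ _ (mem_ndP.mp e.2).2 (ndP_rel2 e.2) rfl
  have hvalRd : ∀ e : {z // z ∈ dP P},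
      φ (⟨Rdash (e : Pos n × Pos n).1 (e : Pos n × Pos n).2, memRd P g hg e.2⟩ : ↥g) = 1 :=
    fun e => h4 _ _ _ (dP_lt e.2) (mem_dP.mp e.2) rfl
  have hφX : φ X = psiL P p₀ (x : Mat n) := by
    rw [hXdef, map_add, map_add, map_sum, map_sum, map_sum]
    simp only [_root_.map_smul, smul_eq_mul, hvalR, hvalRd, mul_one]
    have hDsum : (∑ p : Pos n, (x : Mat n) (nI p) (nI p)
        * φ (⟨Dmat p, memD P g hg p⟩ : ↥g)) = (x : Mat n) (nI p₀) (nI p₀) := by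
      have : ∀ p ∈ Finset.univ, (x : Mat n) (nI p) (nI p)
          * φ (⟨Dmat p, memD P g hg p⟩ : ↥g)
          = if p = p₀ then (x : Mat n) (nI p) (nI p) else 0 := by
        intro p _
        rw [hvalD p, mul_ite, mul_one, mul_zero]
      rw [Finset.sum_congr rfl this, Finset.sum_ite_eq']
      simp
    rw [hDsum, psiL_apply]
    rw [Finset.sum_coe_sort (ndP P) (fun e => (x : Mat n) (nI e.1) (pI e.2)),
      Finset.sum_coe_sort (dP P) (fun e => (x : Mat n) (nI e.2) (nI e.1))]
  exact (congrArg φ hX).trans hφX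

end Aux13
/-- **Theorem.** If `P` is a type-C poset of height one such that `RG(P)` is a tree with
more than one vertex, then `g_C(P)` is contact.  Moreover, if `p₀` is a fixed vertex of
degree one in `RG(P)`, then the functional
`φ = (D_{p₀})* + Σ_{{p,q} non-dashed} (R^±_{p,q})* + Σ_{{p,q} dashed, p<q} (R_{p,q})*`
(i.e. the linear functional taking the value `1` on `D_{p₀}`, on each `R^±_{p,q}`, and
on each `R_{p,q}`, and `0` on the remaining standard basis vectors) is a contact form
for `g_C(P)`. -/
theorem contact_of_tree (n : ℕ) (P : TypeCPoset n) (hP : P.HeightOne)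
    (hconn : (TypeCPoset.RG P).Connected) (hacyc : P.cycles = ∅)
    (hV : 1 < Fintype.card (Pos n))
    (p₀ : Pos n) (hdeg : ∃! q : Pos n, (TypeCPoset.RG P).Adj p₀ q)
    (g : LieSubalgebra ℂ (Mat n))
    (hg : g.toSubmodule = Submodule.span ℂ (TypeCPoset.gcSet P)) :
    IsContact ↥g ∧
      ∀ φ : Module.Dual ℂ ↥g,
        (∀ x : ↥g, (x : Mat n) = TypeCPoset.Dmat p₀ → φ x = 1) →
        (∀ (x : ↥g) (i : Pos n), i ≠ p₀ → (x : Mat n) = TypeCPoset.Dmat i → φ x = 0) →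
        (∀ (x : ↥g) (i j : Pos n), P.lt (-i.val) j.val → P.lt (-j.val) i.val →
          (x : Mat n) = TypeCPoset.Rpm i j → φ x = 1) →
        (∀ (x : ↥g) (i j : Pos n), i.val < j.val → P.lt (-j.val) (-i.val) →
          (x : Mat n) = TypeCPoset.Rdash i j → φ x = 1) →
        IsContactForm ↥g φ := by
  constructor
  · exact ⟨Psi P p₀ g, master P hP hconn hacyc hV p₀ g hg _ (fun x => rfl)⟩
  · intro φ hφ1 hφ2 hφ3 hφ4
    exact master P hP hconn hacyc hV p₀ g hg φ
      (phi_det P hacyc p₀ g hg φ hφ1 hφ2 hφ3 hφ4)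

end LiePoset
end

section
/- Let N ≥ 1, let i_0, i_1, …, i_n ∈ {1,…,N} satisfy i_j ≠ i_{j+1} for all 0 ≤ j ≤ n−1, and let vectors L_0,…,L_n in ℂ^N be given with L_j = e_{i_j} − e_{i_{j+1}} or L_j = −e_{i_j} − e_{i_{j+1}} for 0 ≤ j ≤ n−1, and L_n = e_{i_n} − e_{i_0} or L_n = −e_{i_n} − e_{i_0}. If the number of indices k for which L_k is of the second ('minus-minus') form is odd, then there exist constants c_0,…,c_n ∈ {−1,1} such that the sum of c_j L_j over j = 0,…,n equals −2 e_{i_0}; if that number is even, then there exist constants c_0,…,c_n ∈ {−1,1} such that the sum of c_j L_j over j = 0,…,n equals 0. -/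
/-- **Lemma.** Let `i₀, …, i_n ∈ {1, …, N}` with `i_j ≠ i_{j+1}` for `0 ≤ j ≤ n-1`, and
let `L₀, …, L_n ∈ ℂ^N` satisfy `L_j = e_{i_j} - e_{i_{j+1}}` or
`L_j = -e_{i_j} - e_{i_{j+1}}` for `0 ≤ j ≤ n-1` and `L_n = e_{i_n} - e_{i_0}` or
`L_n = -e_{i_n} - e_{i_0}`.  If the number of indices `k` for which `L_k` is of the
second ("minus-minus") form is odd, then there are constants `c_j ∈ {-1, 1}` with
`∑_{j=0}^n c_j L_j = -2 e_{i_0}`; if that number is even, then there are constants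
`c_j ∈ {-1, 1}` with `∑_{j=0}^n c_j L_j = 0`. -/
theorem cycle_sign_combination (N n : ℕ) (hN : 1 ≤ N) (i : ℕ → Fin N)
    (hadj : ∀ j < n, i j ≠ i (j + 1))
    (L : ℕ → (Fin N → ℂ))
    (hL : ∀ j < n,
      L j = (Pi.single (i j) (1 : ℂ) : Fin N → ℂ) - (Pi.single (i (j + 1)) (1 : ℂ) : Fin N → ℂ) ∨
      L j = -(Pi.single (i j) (1 : ℂ) : Fin N → ℂ) - (Pi.single (i (j + 1)) (1 : ℂ) : Fin N → ℂ))
    (hLn : L n = (Pi.single (i n) (1 : ℂ) : Fin N → ℂ) - (Pi.single (i 0) (1 : ℂ) : Fin N → ℂ) ∨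
      L n = -(Pi.single (i n) (1 : ℂ) : Fin N → ℂ) - (Pi.single (i 0) (1 : ℂ) : Fin N → ℂ)) :
    (Odd (Nat.card {k : ℕ // k ≤ n ∧
        L k = -(Pi.single (i k) (1 : ℂ) : Fin N → ℂ) -
          (Pi.single (i (if k = n then 0 else k + 1)) (1 : ℂ) : Fin N → ℂ)}) →
      ∃ c : ℕ → ℂ, (∀ j ≤ n, c j = 1 ∨ c j = -1) ∧
        ∑ j ∈ Finset.range (n + 1), c j • L j =
          (-2 : ℂ) • (Pi.single (i 0) (1 : ℂ) : Fin N → ℂ)) ∧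
    (Even (Nat.card {k : ℕ // k ≤ n ∧
        L k = -(Pi.single (i k) (1 : ℂ) : Fin N → ℂ) -
          (Pi.single (i (if k = n then 0 else k + 1)) (1 : ℂ) : Fin N → ℂ)}) →
      ∃ c : ℕ → ℂ, (∀ j ≤ n, c j = 1 ∨ c j = -1) ∧
        ∑ j ∈ Finset.range (n + 1), c j • L j = 0) := by
  classical
  -- notation
  set g : ℕ → (Fin N → ℂ) := fun k => (Pi.single (i k) (1 : ℂ) : Fin N → ℂ) with hg
  set Q : ℕ → Prop := fun k =>
    L k = -(Pi.single (i k) (1 : ℂ) : Fin N → ℂ) -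
      (Pi.single (i (if k = n then 0 else k + 1)) (1 : ℂ) : Fin N → ℂ) with hQ
  set σ : ℕ → ℂ := fun k => if Q k then -1 else 1 with hσ
  have hσpm : ∀ k, σ k = 1 ∨ σ k = -1 := by
    intro k
    by_cases h : Q k
    · exact Or.inr (if_pos h)
    · exact Or.inl (if_neg h)
  have hσsq : ∀ k, σ k * σ k = 1 := by
    intro k; rcases hσpm k with h | h <;> rw [h] <;> ring
  -- structure of L
  have hLσ : ∀ k ≤ n, L k = σ k • g k - g (if k = n then 0 else k + 1) := by
    intro k hk
    by_cases h : Q k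
    · simp only [hσ, if_pos h]
      rw [hQ] at h
      rw [h, hg]
      simp [neg_one_smul]
    · simp only [hσ, if_neg h, one_smul]
      rcases lt_or_eq_of_le hk with hk' | rfl
      · have hkn : k ≠ n := Nat.ne_of_lt hk'
        rcases hL k hk' with h1 | h1
        · rw [h1, hg]; simp [hkn]
        · exact absurd (by simp only [hQ, hkn, if_neg hkn]; exact h1) h
      · rcases hLn with h1 | h1
        · rw [h1, hg]; simp
        · exact absurd (by simp only [hQ, if_pos rfl]; exact h1) h
  -- the count equals the cardinality of a filter
  have hcard : Nat.card {k : ℕ // k ≤ n ∧ Q k} =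
      ((Finset.range (n + 1)).filter Q).card := by
    have hset : {k : ℕ | k ≤ n ∧ Q k} = ↑((Finset.range (n + 1)).filter Q) := by
      ext k; simp [Nat.lt_succ_iff]
    calc Nat.card {k : ℕ // k ≤ n ∧ Q k} = Set.ncard {k : ℕ | k ≤ n ∧ Q k} := rfl
      _ = ((Finset.range (n + 1)).filter Q).card := by rw [hset, Set.ncard_coe_finset]
  have hprod : ∏ j ∈ Finset.range (n + 1), σ j =
      (-1 : ℂ) ^ Nat.card {k : ℕ // k ≤ n ∧ Q k} := by
    rw [hcard]
    rw [← Finset.prod_filter_mul_prod_filter_not (Finset.range (n + 1)) Q σ]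
    have h1 : ∏ j ∈ (Finset.range (n + 1)).filter Q, σ j =
        (-1 : ℂ) ^ ((Finset.range (n + 1)).filter Q).card := by
      rw [← Finset.prod_const]
      exact Finset.prod_congr rfl fun x hx => by
        simp only [Finset.mem_filter] at hx; exact if_pos hx.2
    have h2 : ∏ j ∈ (Finset.range (n + 1)).filter (fun k => ¬ Q k), σ j = 1 := by
      exact Finset.prod_eq_one fun x hx => by
        simp only [Finset.mem_filter] at hx; exact if_neg hx.2
    rw [h1, h2, mul_one]
  -- key construction
  have key : ∀ e0 : ℂ, (e0 = 1 ∨ e0 = -1) →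
      ∃ c : ℕ → ℂ, (∀ j ≤ n, c j = 1 ∨ c j = -1) ∧
        ∑ j ∈ Finset.range (n + 1), c j • L j =
          (e0 - e0 * ∏ j ∈ Finset.range (n + 1), σ j) • g 0 := by
    intro e0 he0
    set ε : ℕ → ℂ := fun j => e0 * ∏ t ∈ Finset.range j, σ t with hε
    have hεsucc : ∀ j, ε (j + 1) = ε j * σ j := by
      intro j; simp [hε, Finset.prod_range_succ, mul_assoc]
    have hεpm : ∀ j, ε j = 1 ∨ ε j = -1 := by
      intro j
      induction j with
      | zero => simpa [hε] using he0
      | succ j ih =>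
        rw [hεsucc]
        rcases ih with h | h <;> rcases hσpm j with h' | h' <;> rw [h, h'] <;> simp
    refine ⟨fun j => ε (j + 1), fun j _ => hεpm (j + 1), ?_⟩
    have hterm : ∀ k ≤ n, ε (k + 1) • L k =
        ε k • g k - ε (k + 1) • g (if k = n then 0 else k + 1) := by
      intro k hk
      rw [hLσ k hk, hεsucc, smul_sub, smul_smul]
      congr 1
      rw [mul_assoc, hσsq, mul_one]
    rw [Finset.sum_range_succ]
    have hmain : ∑ j ∈ Finset.range n, ε (j + 1) • L j =
        ε 0 • g 0 - ε n • g n := by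
      rw [← Finset.sum_range_sub' (fun j => ε j • g j) n]
      exact Finset.sum_congr rfl fun j hj => by
        rw [Finset.mem_range] at hj
        rw [hterm j hj.le, if_neg (Nat.ne_of_lt hj)]
    rw [hmain, hterm n le_rfl, if_pos rfl]
    have hε0 : ε 0 = e0 := by simp [hε]
    have hεn1 : ε (n + 1) = e0 * ∏ j ∈ Finset.range (n + 1), σ j := rfl
    rw [hε0, hεn1, sub_smul]
    abel
  constructor
  · intro hodd
    obtain ⟨c, hc, hsum⟩ := key (-1) (Or.inr rfl)
    refine ⟨c, hc, ?_⟩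
    rw [hsum, hprod, (hodd : Odd (Nat.card {k : ℕ // k ≤ n ∧ Q k})).neg_one_pow]
    norm_num
    rfl
  · intro heven
    obtain ⟨c, hc, hsum⟩ := key 1 (Or.inl rfl)
    refine ⟨c, hc, ?_⟩
    rw [hsum, hprod, (heven : Even (Nat.card {k : ℕ // k ≤ n ∧ Q k})).neg_one_pow]
    norm_num
end
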